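/- arXiv:1604.07814 — 10 statements merged into one kernel-verified Lean document; each statement's English description precedes it below -/
import Mathlib

section
/- Let c > 0. A point x ∈ X minimizes f over X if and only if, for every i = 1,…,m, x^i minimizes the regularized function z^i ↦ f(z^i, x^{-i}) + c‖z^i − x^i‖² over X^i. (That is, the set M of minimizers of f over X coincides with the fixed-point set F_T̃ of the regularized Jacobi map.) -/
open Matrix Filter Topology
open scoped RealInnerProductSpace

noncomputable section

/-- The product decision space of `m` agents, agent `i` having an `n i`-dimensional
Euclidean decision vector; equipped with the (ℓ²-of-ℓ²) Euclidean norm. -/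
abbrev JVec (m : ℕ) (n : Fin m → ℕ) :=
  PiLp 2 (fun i : Fin m => EuclideanSpace ℝ (Fin (n i)))

/-- `upd x i z` is the vector `(z, x^{-i})`: `x` with its `i`-th block replaced by `z`. -/
def upd {m : ℕ} {n : Fin m → ℕ} (x : JVec m n) (i : Fin m)
    (z : EuclideanSpace ℝ (Fin (n i))) : JVec m n :=
  WithLp.toLp 2 (Function.update x i z)

set_option maxHeartbeats 400000 in
private lemma grad_ineq {E : Type*} [NormedAddCommGroup E] [NormedSpace ℝ E] (f : E → ℝ)
    (hfc : ConvexOn ℝ Set.univ f) (x y : E) (g' : ℝ)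
    (hg : HasDerivAt (fun t : ℝ => f (x + t • (y - x))) g' 0) :
    f x + g' ≤ f y := by
  have heq : (fun t : ℝ => f (x + t • (y - x))) = f ∘ (AffineMap.lineMap x y : ℝ →ᵃ[ℝ] E) := by
    funext t
    simp only [Function.comp_apply, AffineMap.lineMap_apply_module]
    congr 1
    module
  have hconv : ConvexOn ℝ Set.univ (fun t : ℝ => f (x + t • (y - x))) := by
    rw [heq]
    simpa using hfc.comp_affineMap (AffineMap.lineMap x y : ℝ →ᵃ[ℝ] E)
  have := hconv.le_slope_of_hasDerivAt (Set.mem_univ (0:ℝ)) (Set.mem_univ 1) one_pos hg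
  simp [slope_def_field] at this
  linarith

set_option maxHeartbeats 1000000 in
/-- For `c > 0`: a point `x ∈ X` minimizes `f` over `X` iff each block `xⁱ` minimizes the
regularized `zⁱ ↦ f(zⁱ, x^{-i}) + c‖zⁱ − xⁱ‖²` over `Xⁱ` (i.e. `M = F_T̃`). -/
theorem stmt_3 {m : ℕ} {n : Fin m → ℕ}
    (X : ∀ i : Fin m, Set (EuclideanSpace ℝ (Fin (n i))))
    (hXne : ∀ i, (X i).Nonempty)
    (hXcpt : ∀ i, IsCompact (X i))
    (hXcvx : ∀ i, Convex ℝ (X i))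
    (f : JVec m n → ℝ)
    (hf : ContDiff ℝ 1 f)
    (hfc : ConvexOn ℝ Set.univ f)
    (c : ℝ) (hc : 0 < c)
    (x : JVec m n) (hx : ∀ i, x i ∈ X i) :
    (∀ y : JVec m n, (∀ i, y i ∈ X i) → f x ≤ f y) ↔
      (∀ i : Fin m, ∀ z ∈ X i, f x ≤ f (upd x i z) + c * ‖z - x i‖ ^ 2) := by
  have hdf : Differentiable ℝ f := hf.differentiable one_ne_zero
  set L : JVec m n →L[ℝ] ℝ := fderiv ℝ f x with hL
  -- derivative of f along a ray from x
  have hray : ∀ v : JVec m n, HasDerivAt (fun t : ℝ => f (x + t • v)) (L v) 0 := by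
    intro v
    have h1 : HasDerivAt (fun t : ℝ => x + t • v) v 0 := by
      simpa using ((hasDerivAt_id (0:ℝ)).smul_const v).const_add x
    have h0 : x + (0:ℝ) • v = x := by simp
    have h2 := (hdf (x + (0:ℝ) • v)).hasFDerivAt.comp_hasDerivAt (0:ℝ) h1
    rw [h0] at h2
    exact h2
  constructor
  · -- easy direction
    intro hmin i z hz
    have hmem : ∀ j, (upd x i z) j ∈ X j := by
      intro j
      by_cases hj : j = i
      · subst hj; simpa [upd] using hz
      · simpa [upd, Function.update_of_ne hj] using hx j
    have := hmin (upd x i z) hmem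
    nlinarith [sq_nonneg ‖z - x i‖, norm_nonneg (z - x i)]
  · -- hard direction
    intro h y hy
    -- block direction vectors
    set v : Fin m → JVec m n := fun i => WithLp.toLp 2 (Function.update (0 : JVec m n) i (y i - x i)) with hv
    -- Step A: L (v i) ≥ 0
    have hA : ∀ i : Fin m, 0 ≤ L (v i) := by
      intro i
      set d : ℝ := ‖y i - x i‖ ^ 2 with hd
      have hd0 : 0 ≤ d := sq_nonneg _
      have hderiv := hray (v i)
      have hslope : Tendsto (slope (fun t : ℝ => f (x + t • v i)) 0) (𝓝[>] (0:ℝ))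
          (𝓝 (L (v i))) :=
        ((hasDerivAt_iff_tendsto_slope.mp hderiv).mono_left
          (nhdsWithin_mono _ (fun t ht => ne_of_gt ht)))
      have hlow : Tendsto (fun t : ℝ => -c * t * d) (𝓝[>] (0:ℝ)) (𝓝 0) := by
        have hcont : Continuous fun t : ℝ => -c * t * d := by continuity
        simpa using (hcont.tendsto 0).mono_left nhdsWithin_le_nhds
      refine le_of_tendsto_of_tendsto hlow hslope ?_
      filter_upwards [Ioc_mem_nhdsGT_of_mem (Set.mem_Ico.mpr ⟨le_refl (0:ℝ), one_pos⟩)]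
        with t ht
      obtain ⟨ht0, ht1⟩ := ht
      -- x + t • v i = upd x i (x i + t • (y i - x i))
      have hkey : x + t • v i = upd x i (x i + t • (y i - x i)) := by
        refine PiLp.ext fun j => ?_
        by_cases hj : j = i
        · subst hj; simp [upd, hv]
        · simp [upd, hv, Function.update_of_ne hj]
      have hmemi : x i + t • (y i - x i) ∈ X i := by
        have := hXcvx i (hx i) (hy i) (by linarith : (0:ℝ) ≤ 1 - t) ht0.le (by ring)
        have heq : (1 - t) • x i + t • y i = x i + t • (y i - x i) := by module
        rwa [heq] at this
      have hb := h i _ hmemi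
      rw [← hkey] at hb
      have hnorm : ‖(x i + t • (y i - x i)) - x i‖ ^ 2 = t ^ 2 * d := by
        have : (x i + t • (y i - x i)) - x i = t • (y i - x i) := by module
        rw [this, norm_smul]
        simp [hd, abs_of_pos ht0]
        ring
      rw [hnorm] at hb
      -- hb : f x ≤ f (x + t • v i) + c * (t ^ 2 * d)
      have : -c * t * d ≤ (f (x + t • v i) - f (x + (0:ℝ) • v i)) / (t - 0) := by
        rw [le_div_iff₀ (by simpa using ht0)]
        simp only [zero_smul, add_zero, sub_zero]
        have hr : -c * t * d * t = -(c * (t ^ 2 * d)) := by ring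
        linarith
      simpa [slope_def_field] using this
    -- Step B: sum of block directions is y - x
    have hsum : ∑ i, v i = y - x := by
      refine PiLp.ext fun j => ?_
      have : (∑ i, v i) j = ∑ i, (v i) j := by
        rw [WithLp.ofLp_sum]; exact Finset.sum_apply j Finset.univ _
      rw [this]
      rw [Finset.sum_eq_single j]
      · simp [hv]
      · intro b _ hb
        simp [hv, Function.update_of_ne (Ne.symm hb)]
      · intro hj; exact absurd (Finset.mem_univ j) hj
    have hLyx : 0 ≤ L (y - x) := by
      rw [← hsum, map_sum]
      exact Finset.sum_nonneg fun i _ => hA i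
    have := grad_ineq f hfc x y (L (y - x)) (hray (y - x))
    linarith
end
end

section
/- Suppose c > λ_max(Q_z). Let x, y ∈ X, let u ∈ X minimize z ↦ Σ_{i=1}^m [ f(z^i, x^{-i}) + c‖z^i − x^i‖² ] over X, and let w ∈ X minimize z ↦ Σ_{i=1}^m [ f(z^i, y^{-i}) + c‖z^i − y^i‖² ] over X. Then ‖u − w‖²_{Q_d + cI − Q} ≤ (x − y)ᵀ(Q_d + cI − Q)(u − w); that is, the regularized Jacobi update map T̃ is firmly nonexpansive with respect to the norm induced by the positive definite matrix Q_d + cI − Q. -/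
open Matrix Filter Topology
open scoped RealInnerProductSpace

noncomputable section

/-- The index set of the stacked vector `x = (x^1, …, x^m)`. -/
abbrev JIdx (m : ℕ) (n : Fin m → ℕ) := Σ i : Fin m, Fin (n i)

/-- Flatten a block vector into a plain vector indexed by `JIdx m n`. -/
def flat {m : ℕ} {n : Fin m → ℕ} (x : JVec m n) : JIdx m n → ℝ :=
  fun p => x p.1 p.2

/-- The block-diagonal part `Q_d` of `Q`: equal to `Q` on entries whose row and column
indices lie in the same agent block, and zero elsewhere. -/
def blockDiagPart {m : ℕ} {n : Fin m → ℕ} (Q : Matrix (JIdx m n) (JIdx m n) ℝ) :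
    Matrix (JIdx m n) (JIdx m n) ℝ :=
  Matrix.of fun p q => if p.1 = q.1 then Q p q else 0

/-- The quadratic objective `f(x) = xᵀ Q x + qᵀ x`. -/
def quadF {m : ℕ} {n : Fin m → ℕ} (Q : Matrix (JIdx m n) (JIdx m n) ℝ)
    (q : JIdx m n → ℝ) (x : JVec m n) : ℝ :=
  flat x ⬝ᵥ (Q *ᵥ flat x) + q ⬝ᵥ flat x

/-- The largest eigenvalue of a real symmetric (Hermitian) matrix. -/
noncomputable def maxEig {ι : Type*} [Fintype ι] [DecidableEq ι]
    {A : Matrix ι ι ℝ} (hA : A.IsHermitian) : ℝ :=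
  ⨆ p, hA.eigenvalues p

namespace StmtAux

variable {m : ℕ} {n : Fin m → ℕ}

def blk (i : Fin m) (a : JIdx m n → ℝ) : JIdx m n → ℝ := fun p => if p.1 = i then a p else 0

lemma sum_blk (a : JIdx m n → ℝ) : ∑ i, blk i a = a := by
  funext p
  simp [blk, Finset.sum_apply, Finset.sum_ite_eq]

lemma flat_upd (x v : JVec m n) (i : Fin m) :
    flat (upd x i (v i)) = flat x + blk i (flat v - flat x) := by
  funext p
  simp only [flat, upd, blk, Pi.add_apply, Pi.sub_apply]
  rcases eq_or_ne p.1 i with h | h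
  · subst h
    simp [Function.update_self]
  · simp [Function.update_of_ne h, h]

lemma mulVec_sum' (A : Matrix (JIdx m n) (JIdx m n) ℝ) (f : Fin m → JIdx m n → ℝ) :
    A *ᵥ (∑ i, f i) = ∑ i, A *ᵥ f i := by
  funext p
  simp only [mulVec, dotProduct, Finset.sum_apply, Finset.mul_sum]
  rw [Finset.sum_comm]

lemma dot_sum (x : JIdx m n → ℝ) (f : Fin m → JIdx m n → ℝ) :
    x ⬝ᵥ (∑ i, f i) = ∑ i, x ⬝ᵥ f i := by
  simp only [dotProduct, Finset.sum_apply, Finset.mul_sum]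
  rw [Finset.sum_comm]

lemma dsym (A : Matrix (JIdx m n) (JIdx m n) ℝ) (hA : Aᵀ = A) (v w : JIdx m n → ℝ) :
    v ⬝ᵥ A *ᵥ w = w ⬝ᵥ A *ᵥ v := by
  rw [dotProduct_mulVec]
  conv_lhs => rw [← hA]
  rw [vecMul_transpose, dotProduct_comm]

lemma sum_blk_quad (Q : Matrix (JIdx m n) (JIdx m n) ℝ) (a : JIdx m n → ℝ) :
    ∑ i, blk i a ⬝ᵥ Q *ᵥ blk i a = a ⬝ᵥ blockDiagPart Q *ᵥ a := by
  simp only [dotProduct, mulVec, blockDiagPart, blk, Matrix.of_apply]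
  rw [Finset.sum_comm]
  refine Finset.sum_congr rfl fun p _ => ?_
  rw [Finset.sum_eq_single p.1]
  · rw [if_pos rfl]
    congr 1
    refine Finset.sum_congr rfl fun r _ => ?_
    rcases eq_or_ne p.1 r.1 with h | h
    · rw [if_pos h.symm, if_pos h]
    · rw [if_neg (Ne.symm h), if_neg h, mul_zero, zero_mul]
  · intro i _ hne
    rw [if_neg (Ne.symm hne), zero_mul]
  · intro h
    exact absurd (Finset.mem_univ _) h

lemma norm_sq_sum (x v : JVec m n) :
    ∑ i, ‖v i - x i‖ ^ 2 = (flat v - flat x) ⬝ᵥ (flat v - flat x) := by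
  have h1 : ∀ i : Fin m, ‖v i - x i‖ ^ 2 = ∑ j, ((v i) j - (x i) j) ^ 2 := by
    intro i
    rw [EuclideanSpace.norm_eq, Real.sq_sqrt (by positivity)]
    refine Finset.sum_congr rfl fun j _ => ?_
    simp [Real.norm_eq_abs, sq_abs]
  simp only [h1]
  rw [Finset.sum_sigma' Finset.univ (fun _ => Finset.univ)
    (fun i j => ((v i) j - (x i) j) ^ 2)]
  rw [show (Finset.univ.sigma fun _ : Fin m => (Finset.univ : Finset (Fin (n _)))) =
    (Finset.univ : Finset (JIdx m n)) from Finset.univ_sigma_univ]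
  simp only [dotProduct, Pi.sub_apply, flat]
  exact Finset.sum_congr rfl fun p _ => by ring

lemma sum_obj (Q : Matrix (JIdx m n) (JIdx m n) ℝ) (hQsym : Qᵀ = Q)
    (q : JIdx m n → ℝ) (c : ℝ) (x v : JVec m n) :
    ∑ i, (quadF Q q (upd x i (v i)) + c * ‖v i - x i‖ ^ 2)
      = (m : ℝ) * quadF Q q x
        + (2 * (flat x ⬝ᵥ Q *ᵥ (flat v - flat x))
           + (flat v - flat x) ⬝ᵥ blockDiagPart Q *ᵥ (flat v - flat x)
           + c * ((flat v - flat x) ⬝ᵥ (flat v - flat x))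
           + q ⬝ᵥ (flat v - flat x)) := by
  set g := flat v - flat x with hg
  have hq : ∀ i, quadF Q q (upd x i (v i))
      = quadF Q q x
        + (2 * (flat x ⬝ᵥ Q *ᵥ blk i g) + blk i g ⬝ᵥ Q *ᵥ blk i g + q ⬝ᵥ blk i g) := by
    intro i
    rw [quadF, flat_upd x v i, ← hg, quadF]
    simp only [dotProduct_add, add_dotProduct, mulVec_add]
    rw [dsym Q hQsym (blk i g) (flat x)]
    ring
  rw [Finset.sum_add_distrib, ← Finset.mul_sum, norm_sq_sum x v, ← hg]
  simp only [hq]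
  rw [Finset.sum_add_distrib, Finset.sum_add_distrib, Finset.sum_add_distrib,
    sum_blk_quad, ← Finset.mul_sum, ← dot_sum, ← mulVec_sum', sum_blk, ← dot_sum, sum_blk,
    Finset.sum_const, Finset.card_univ, Fintype.card_fin, nsmul_eq_mul]
  ring

lemma lin_nonneg {L K : ℝ} (h : ∀ t : ℝ, 0 < t → t ≤ 1 → 0 ≤ L * t + K * t ^ 2) : 0 ≤ L := by
  by_contra hL
  push_neg at hL
  rcases le_or_gt K 0 with hK | hK
  · have := h 1 one_pos le_rfl
    nlinarith
  · have ht1 : 0 < -L / (2 * K) := div_pos (by linarith) (by linarith)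
    set t := min 1 (-L / (2 * K)) with htdef
    have h0 : 0 < t := lt_min one_pos ht1
    have h2 := h t h0 (min_le_left _ _)
    have h3 : t ≤ -L / (2 * K) := min_le_right _ _
    have h4 : K * t ≤ -L / 2 := by
      have := mul_le_mul_of_nonneg_left h3 hK.le
      calc K * t ≤ K * (-L / (2 * K)) := this
        _ = -L / 2 := by field_simp
    nlinarith [mul_le_mul_of_nonneg_right h4 h0.le]

end StmtAux

/-- The regularized Jacobi update map is firmly nonexpansive w.r.t. the norm induced by
the positive definite matrix `Q_d + cI − Q`, when `c > λ_max(Q_z)`. -/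
theorem stmt_4 {m : ℕ} {n : Fin m → ℕ} [Nonempty (JIdx m n)]
    (X : ∀ i : Fin m, Set (EuclideanSpace ℝ (Fin (n i))))
    (hXne : ∀ i, (X i).Nonempty)
    (hXcpt : ∀ i, IsCompact (X i))
    (hXcvx : ∀ i, Convex ℝ (X i))
    (Q : Matrix (JIdx m n) (JIdx m n) ℝ) (hQ : Q.PosSemidef)
    (q : JIdx m n → ℝ)
    (hQz : (Q - blockDiagPart Q).IsHermitian)
    (c : ℝ) (hc : maxEig hQz < c)
    (x y u w : JVec m n)
    (hx : ∀ i, x i ∈ X i) (hy : ∀ i, y i ∈ X i)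
    (huX : ∀ i, u i ∈ X i) (hwX : ∀ i, w i ∈ X i)
    (hu : ∀ v : JVec m n, (∀ i, v i ∈ X i) →
      (∑ i : Fin m, (quadF Q q (upd x i (u i)) + c * ‖u i - x i‖ ^ 2)) ≤
        ∑ i : Fin m, (quadF Q q (upd x i (v i)) + c * ‖v i - x i‖ ^ 2))
    (hw : ∀ v : JVec m n, (∀ i, v i ∈ X i) →
      (∑ i : Fin m, (quadF Q q (upd y i (w i)) + c * ‖w i - y i‖ ^ 2)) ≤
        ∑ i : Fin m, (quadF Q q (upd y i (v i)) + c * ‖v i - y i‖ ^ 2)) :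
    flat (u - w) ⬝ᵥ ((blockDiagPart Q + c • (1 : Matrix (JIdx m n) (JIdx m n) ℝ) - Q)
        *ᵥ flat (u - w)) ≤
      flat (x - y) ⬝ᵥ ((blockDiagPart Q + c • (1 : Matrix (JIdx m n) (JIdx m n) ℝ) - Q)
        *ᵥ flat (u - w)) := by

  classical
  have hQsym : Qᵀ = Q := by
    ext p r
    have h := congrFun (congrFun hQ.1 p) r
    simpa [Matrix.conjTranspose_apply] using h
  have hQdsym : (blockDiagPart Q)ᵀ = blockDiagPart Q := by
    ext p r
    simp only [Matrix.transpose_apply, blockDiagPart, Matrix.of_apply]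
    rcases eq_or_ne p.1 r.1 with h | h
    · rw [if_pos h.symm, if_pos h]
      have h2 := congrFun (congrFun hQsym p) r
      simpa using h2
    · rw [if_neg (Ne.symm h), if_neg h]
  set Qd := blockDiagPart Q with hQddef
  set fx := flat x with hfxd
  set fy := flat y with hfyd
  set fu := flat u with hfud
  set fw := flat w with hfwd
  have hpsi : ∀ (z a b : JIdx m n → ℝ) (t : ℝ),
      2 * (z ⬝ᵥ Q *ᵥ (a + t • b)) + (a + t • b) ⬝ᵥ Qd *ᵥ (a + t • b)
        + c * ((a + t • b) ⬝ᵥ (a + t • b)) + q ⬝ᵥ (a + t • b)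
      = (2 * (z ⬝ᵥ Q *ᵥ a) + a ⬝ᵥ Qd *ᵥ a + c * (a ⬝ᵥ a) + q ⬝ᵥ a)
        + (2 * (z ⬝ᵥ Q *ᵥ b) + a ⬝ᵥ Qd *ᵥ b + b ⬝ᵥ Qd *ᵥ a + c * (a ⬝ᵥ b + b ⬝ᵥ a)
            + q ⬝ᵥ b) * t
        + (b ⬝ᵥ Qd *ᵥ b + c * (b ⬝ᵥ b)) * t ^ 2 := by
    intro z a b t
    simp only [Matrix.mulVec_add, Matrix.mulVec_smul, dotProduct_add,
      add_dotProduct, dotProduct_smul, smul_dotProduct, smul_eq_mul]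
    ring
  have hvt : ∀ (z0 z1 : JVec m n) (t : ℝ),
      flat (WithLp.toLp 2 (fun i => z0 i + t • (z1 i - z0 i)) : JVec m n)
        = flat z0 + t • (flat z1 - flat z0) := by
    intro z0 z1 t
    funext p
    simp [flat, smul_eq_mul]
  have hfeas : ∀ (z0 z1 : JVec m n), (∀ i, z0 i ∈ X i) → (∀ i, z1 i ∈ X i) →
      ∀ t : ℝ, 0 < t → t ≤ 1 →
      ∀ i, ((WithLp.toLp 2 (fun i => z0 i + t • (z1 i - z0 i)) : JVec m n) i) ∈ X i := by
    intro z0 z1 h0 h1 t ht0 ht1 i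
    have hmem := hXcvx i (h0 i) (h1 i) (by linarith : (0:ℝ) ≤ 1 - t) ht0.le (by ring)
    have heq : z0 i + t • (z1 i - z0 i) = (1 - t) • z0 i + t • z1 i := by
      rw [smul_sub, sub_smul, one_smul]
      abel
    show z0 i + t • (z1 i - z0 i) ∈ X i
    rw [heq]
    exact hmem
  have key : ∀ (z0 z1 : JVec m n), (∀ i, z0 i ∈ X i) → (∀ i, z1 i ∈ X i) →
      (∀ v : JVec m n, (∀ i, v i ∈ X i) →
        (∑ i : Fin m, (quadF Q q (upd z0 i (z1 i)) + c * ‖z1 i - z0 i‖ ^ 2)) ≤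
          ∑ i : Fin m, (quadF Q q (upd z0 i (v i)) + c * ‖v i - z0 i‖ ^ 2)) →
      ∀ (d : JVec m n), (∀ i, d i ∈ X i) →
      0 ≤ 2 * (flat z0 ⬝ᵥ Q *ᵥ (flat d - flat z1))
          + (flat z1 - flat z0) ⬝ᵥ Qd *ᵥ (flat d - flat z1)
          + (flat d - flat z1) ⬝ᵥ Qd *ᵥ (flat z1 - flat z0)
          + c * ((flat z1 - flat z0) ⬝ᵥ (flat d - flat z1)
              + (flat d - flat z1) ⬝ᵥ (flat z1 - flat z0))
          + q ⬝ᵥ (flat d - flat z1) := by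
    intro z0 z1 h0 h1 hmin d hd
    refine StmtAux.lin_nonneg
      (K := (flat d - flat z1) ⬝ᵥ Qd *ᵥ (flat d - flat z1)
        + c * ((flat d - flat z1) ⬝ᵥ (flat d - flat z1))) ?_
    intro t ht0 ht1
    have h := hmin (WithLp.toLp 2 (fun i => z1 i + t • (d i - z1 i))) (hfeas z1 d h1 hd t ht0 ht1)
    rw [StmtAux.sum_obj Q hQsym q c z0 z1,
        StmtAux.sum_obj Q hQsym q c z0 (WithLp.toLp 2 (fun i => z1 i + t • (d i - z1 i)))] at h
    rw [hvt z1 d t] at h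
    have harr : flat z1 + t • (flat d - flat z1) - flat z0
        = (flat z1 - flat z0) + t • (flat d - flat z1) := by
      abel
    rw [harr, hpsi (flat z0) (flat z1 - flat z0) (flat d - flat z1) t] at h
    linarith
  have hLu := key x u hx huX hu w hwX
  have hLw := key y w hy hwX hw u huX
  simp only [← hfxd, ← hfyd, ← hfud, ← hfwd] at hLu hLw
  have hPSD : 0 ≤ (fu - fw) ⬝ᵥ Q *ᵥ (fu - fw) := by
    have h := hQ.dotProduct_mulVec_nonneg (fu - fw)
    simpa using h
  have hfs1 : flat (u - w) = fu - fw := rfl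
  have hfs2 : flat (x - y) = fx - fy := rfl
  rw [hfs1, hfs2]
  simp only [Matrix.add_mulVec, Matrix.sub_mulVec, Matrix.smul_mulVec,
    Matrix.one_mulVec, dotProduct_add, dotProduct_sub,
    dotProduct_smul, smul_eq_mul] at hLu hLw hPSD ⊢
  simp only [Matrix.mulVec_sub, sub_dotProduct, dotProduct_sub]
    at hLu hLw hPSD ⊢
  simp only [StmtAux.dsym Q hQsym fu fx, StmtAux.dsym Q hQsym fw fx,
    StmtAux.dsym Q hQsym fu fy, StmtAux.dsym Q hQsym fw fy, StmtAux.dsym Q hQsym fw fu,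
    StmtAux.dsym Qd hQdsym fu fx, StmtAux.dsym Qd hQdsym fw fx,
    StmtAux.dsym Qd hQdsym fu fy, StmtAux.dsym Qd hQdsym fw fy,
    StmtAux.dsym Qd hQdsym fw fu,
    dotProduct_comm fu fx, dotProduct_comm fw fx,
    dotProduct_comm fu fy, dotProduct_comm fw fy,
    dotProduct_comm fw fu] at hLu hLw hPSD ⊢
  linarith
end
end

section
/- Let c > 0 and x ∈ X. The matrix Q_d + cI is positive definite; set ξ(x) = (Q_d + cI)^{-1}( c x − Q_z x − q/2 ). Then a point u ∈ X minimizes z ↦ Σ_{i=1}^m [ f(z^i, x^{-i}) + c‖z^i − x^i‖² ] over X if and only if u minimizes z ↦ (z − ξ(x))ᵀ(Q_d + cI)(z − ξ(x)) over X; that is, the regularized Jacobi update of x equals the projection of ξ(x) onto X with respect to the norm ‖·‖_{Q_d + cI}. -/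
open Matrix Filter Topology
open scoped RealInnerProductSpace

noncomputable section

section JacobiAux

variable {m : ℕ} {n : Fin m → ℕ}

/-- Restriction of a flat vector to agent block `i` (zero outside the block). -/
def Pblk (i : Fin m) (v : JIdx m n → ℝ) : JIdx m n → ℝ :=
  fun p => if p.1 = i then v p else 0

lemma sum_Pblk (v : JIdx m n → ℝ) : ∑ i, Pblk i v = v := by
  funext p
  simp [Pblk, Finset.sum_apply, Finset.sum_ite_eq' Finset.univ p.1]

lemma quad_Pblk (Q : Matrix (JIdx m n) (JIdx m n) ℝ) (u v : JIdx m n → ℝ) :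
    ∑ i, Pblk i u ⬝ᵥ (Q *ᵥ Pblk i v) = u ⬝ᵥ (blockDiagPart Q *ᵥ v) := by
  simp only [dotProduct, mulVec, Pblk, blockDiagPart, Matrix.of_apply, Finset.mul_sum]
  rw [Finset.sum_comm]
  refine Finset.sum_congr rfl fun p _ => ?_
  rw [Finset.sum_comm]
  refine Finset.sum_congr rfl fun q _ => ?_
  have key : ∀ i : Fin m, (if p.1 = i then u p else 0) * ((Q p q) * (if q.1 = i then v q else 0))
      = if p.1 = i then (if p.1 = q.1 then u p * (Q p q * v q) else 0) else 0 := by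
    intro i
    by_cases h1 : p.1 = i
    · by_cases h2 : p.1 = q.1
      · simp [h1, h2, (h2.symm.trans h1)]
      · have h3 : ¬ q.1 = i := fun hh => h2 (h1.trans hh.symm)
        have h4 : ¬ i = q.1 := fun hh => h3 hh.symm
        simp [h1, h2, h3, h4]
    · simp [h1]
  rw [Finset.sum_congr rfl (fun i _ => key i), Finset.sum_ite_eq Finset.univ p.1]
  simp [mul_ite]

lemma sum_Pblk_dot (v w : JIdx m n → ℝ) : ∑ i, Pblk i v ⬝ᵥ w = v ⬝ᵥ w := by
  simp only [dotProduct]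
  rw [Finset.sum_comm]
  refine Finset.sum_congr rfl fun p _ => ?_
  rw [← Finset.sum_mul]
  congr 1
  simp [Pblk, Finset.sum_ite_eq' Finset.univ p.1]

lemma sum_dot_Pblk (w v : JIdx m n → ℝ) : ∑ i, w ⬝ᵥ Pblk i v = w ⬝ᵥ v := by
  rw [Finset.sum_congr rfl fun i _ => dotProduct_comm w (Pblk i v), sum_Pblk_dot,
    dotProduct_comm]

lemma flat_upd (x z : JVec m n) (i : Fin m) :
    flat (upd x i (z i)) = flat x + Pblk i (flat z - flat x) := by
  funext p
  obtain ⟨j, k⟩ := p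
  by_cases h : j = i
  · subst h
    simp [flat, upd, Pblk, Function.update_self]
  · simp [flat, upd, Pblk, Function.update_of_ne h, h]

lemma symm_dot {ι : Type*} [Fintype ι] {A : Matrix ι ι ℝ} (hA : Aᵀ = A) (u v : ι → ℝ) :
    u ⬝ᵥ (A *ᵥ v) = v ⬝ᵥ (A *ᵥ u) := by
  rw [dotProduct_mulVec, ← mulVec_transpose, hA, dotProduct_comm]

lemma key_lemma (Q : Matrix (JIdx m n) (JIdx m n) ℝ) (hQt : Qᵀ = Q)
    (q : JIdx m n → ℝ) (c : ℝ) (A : Matrix (JIdx m n) (JIdx m n) ℝ)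
    (hA : A = blockDiagPart Q + c • 1) (hAt : Aᵀ = A)
    (x z : JVec m n) (ξ : JIdx m n → ℝ)
    (hAxi : A *ᵥ ξ = c • flat x - (Q - blockDiagPart Q) *ᵥ flat x - (1 / 2 : ℝ) • q) :
    (∑ i : Fin m, (quadF Q q (upd x i (z i)) + c * ‖z i - x i‖ ^ 2))
      = (flat z - ξ) ⬝ᵥ (A *ᵥ (flat z - ξ))
        + ((∑ _i : Fin m, (flat x ⬝ᵥ (Q *ᵥ flat x) + q ⬝ᵥ flat x))
           - (flat x - ξ) ⬝ᵥ (A *ᵥ (flat x - ξ))) := by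
  classical
  have hAmv : ∀ w : JIdx m n → ℝ, A *ᵥ w = blockDiagPart Q *ᵥ w + c • w := by
    intro w; rw [hA, Matrix.add_mulVec, Matrix.smul_mulVec, Matrix.one_mulVec]
  set d : JIdx m n → ℝ := flat z - flat x with hd
  have hnorm : ∀ i, ‖z i - x i‖ ^ 2 = ∑ k, d ⟨i, k⟩ ^ 2 := by
    intro i
    rw [EuclideanSpace.norm_eq, Real.sq_sqrt (by positivity)]
    refine Finset.sum_congr rfl fun k _ => ?_
    have h1 : (z i - x i) k = z i k - x i k := rfl
    have h2 : d ⟨i, k⟩ = z i k - x i k := by simp [hd, flat]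
    rw [h1, h2, Real.norm_eq_abs, sq_abs]
  have hcomb : ∀ i, quadF Q q (upd x i (z i)) + c * ‖z i - x i‖ ^ 2
      = (flat x ⬝ᵥ (Q *ᵥ flat x) + q ⬝ᵥ flat x)
        + (2 * (Pblk i d ⬝ᵥ (Q *ᵥ flat x))
          + (Pblk i d ⬝ᵥ (Q *ᵥ Pblk i d) + (q ⬝ᵥ Pblk i d + c * ∑ k, d ⟨i, k⟩ ^ 2))) := by
    intro i
    rw [hnorm i, quadF, flat_upd x z i, ← hd]
    simp only [Matrix.mulVec_add, dotProduct_add, add_dotProduct]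
    rw [symm_dot hQt (flat x) (Pblk i d)]
    ring
  have hdd : d ⬝ᵥ d = ∑ i, ∑ k, d ⟨i, k⟩ ^ 2 := by
    rw [dotProduct, ← Finset.univ_sigma_univ, Finset.sum_sigma]
    exact Finset.sum_congr rfl fun i _ => Finset.sum_congr rfl fun k _ => (sq _).symm
  have hL : (∑ i : Fin m, (quadF Q q (upd x i (z i)) + c * ‖z i - x i‖ ^ 2))
      = (∑ _i : Fin m, (flat x ⬝ᵥ (Q *ᵥ flat x) + q ⬝ᵥ flat x))
        + (2 * (d ⬝ᵥ (Q *ᵥ flat x))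
          + (d ⬝ᵥ (blockDiagPart Q *ᵥ d) + (q ⬝ᵥ d + c * (d ⬝ᵥ d)))) := by
    rw [Finset.sum_congr rfl fun i _ => hcomb i]
    simp only [Finset.sum_add_distrib]
    rw [← Finset.mul_sum, sum_Pblk_dot, quad_Pblk, sum_dot_Pblk, ← Finset.mul_sum, ← hdd]
  have hsplit : flat z - ξ = d + (flat x - ξ) := by
    rw [hd, sub_add_sub_cancel]
  have hAr : A *ᵥ (flat x - ξ) = Q *ᵥ flat x + (1 / 2 : ℝ) • q := by
    rw [Matrix.mulVec_sub, hAxi, hAmv, Matrix.sub_mulVec]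
    funext p
    simp only [Pi.add_apply, Pi.sub_apply, Pi.smul_apply, smul_eq_mul]
    ring
  have hR : (flat z - ξ) ⬝ᵥ (A *ᵥ (flat z - ξ))
      = (d ⬝ᵥ (blockDiagPart Q *ᵥ d) + c * (d ⬝ᵥ d))
        + 2 * (d ⬝ᵥ (Q *ᵥ flat x) + (1 / 2 : ℝ) * (d ⬝ᵥ q))
        + (flat x - ξ) ⬝ᵥ (A *ᵥ (flat x - ξ)) := by
    rw [hsplit, Matrix.mulVec_add, dotProduct_add, add_dotProduct, add_dotProduct,
      symm_dot hAt (flat x - ξ) d, hAr, hAmv d]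
    simp only [dotProduct_add, dotProduct_smul, smul_eq_mul]
    ring
  rw [hL, hR, dotProduct_comm q d]
  ring

end JacobiAux

/-- For `c > 0` the matrix `Q_d + cI` is positive definite, and with
`ξ(x) = (Q_d + cI)⁻¹(cx − Q_z x − q/2)`, a point `u ∈ X` minimizes the regularized Jacobi
objective `z ↦ Σᵢ [f(zⁱ, x^{-i}) + c‖zⁱ − xⁱ‖²]` over `X` iff it minimizes
`z ↦ (z − ξ(x))ᵀ(Q_d + cI)(z − ξ(x))` over `X`, i.e. the update is the projection of
`ξ(x)` onto `X` in the `‖·‖_{Q_d + cI}` norm. -/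
theorem stmt_5 {m : ℕ} {n : Fin m → ℕ}
    (X : ∀ i : Fin m, Set (EuclideanSpace ℝ (Fin (n i))))
    (hXne : ∀ i, (X i).Nonempty)
    (hXcpt : ∀ i, IsCompact (X i))
    (hXcvx : ∀ i, Convex ℝ (X i))
    (Q : Matrix (JIdx m n) (JIdx m n) ℝ) (hQ : Q.PosSemidef)
    (q : JIdx m n → ℝ)
    (c : ℝ) (hc : 0 < c)
    (x : JVec m n) (hx : ∀ i, x i ∈ X i) :
    (blockDiagPart Q + c • (1 : Matrix (JIdx m n) (JIdx m n) ℝ)).PosDef ∧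
      ∀ u : JVec m n, (∀ i, u i ∈ X i) →
        ((∀ v : JVec m n, (∀ i, v i ∈ X i) →
            (∑ i : Fin m, (quadF Q q (upd x i (u i)) + c * ‖u i - x i‖ ^ 2)) ≤
              ∑ i : Fin m, (quadF Q q (upd x i (v i)) + c * ‖v i - x i‖ ^ 2)) ↔
          (∀ v : JVec m n, (∀ i, v i ∈ X i) →
            (flat u - (blockDiagPart Q + c • (1 : Matrix (JIdx m n) (JIdx m n) ℝ))⁻¹ *ᵥ
                (c • flat x - (Q - blockDiagPart Q) *ᵥ flat x - (1 / 2 : ℝ) • q)) ⬝ᵥ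
              ((blockDiagPart Q + c • (1 : Matrix (JIdx m n) (JIdx m n) ℝ)) *ᵥ
                (flat u - (blockDiagPart Q + c • (1 : Matrix (JIdx m n) (JIdx m n) ℝ))⁻¹ *ᵥ
                  (c • flat x - (Q - blockDiagPart Q) *ᵥ flat x - (1 / 2 : ℝ) • q))) ≤
            (flat v - (blockDiagPart Q + c • (1 : Matrix (JIdx m n) (JIdx m n) ℝ))⁻¹ *ᵥ
                (c • flat x - (Q - blockDiagPart Q) *ᵥ flat x - (1 / 2 : ℝ) • q)) ⬝ᵥ
              ((blockDiagPart Q + c • (1 : Matrix (JIdx m n) (JIdx m n) ℝ)) *ᵥ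
                (flat v - (blockDiagPart Q + c • (1 : Matrix (JIdx m n) (JIdx m n) ℝ))⁻¹ *ᵥ
                  (c • flat x - (Q - blockDiagPart Q) *ᵥ flat x - (1 / 2 : ℝ) • q))))) := by
  classical
  set A : Matrix (JIdx m n) (JIdx m n) ℝ := blockDiagPart Q + c • 1 with hAdef
  set b : JIdx m n → ℝ :=
    c • flat x - (Q - blockDiagPart Q) *ᵥ flat x - (1 / 2 : ℝ) • q with hbdef
  set ξ : JIdx m n → ℝ := A⁻¹ *ᵥ b with hxidef
  have hQt : Qᵀ = Q := by
    ext p q'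
    have h := congrFun (congrFun hQ.1 p) q'
    simpa [Matrix.conjTranspose_apply, Matrix.transpose_apply] using h
  have hsym : ∀ a b' : JIdx m n, Q a b' = Q b' a := by
    intro a b'
    nth_rewrite 1 [← hQt]
    rw [Matrix.transpose_apply]
  have hBt : (blockDiagPart Q)ᵀ = blockDiagPart Q := by
    ext p q'
    simp only [Matrix.transpose_apply, blockDiagPart, Matrix.of_apply]
    by_cases h : p.1 = q'.1
    · rw [if_pos h.symm, if_pos h]
      exact hsym q' p
    · rw [if_neg (fun hh => h hh.symm), if_neg h]
  have hAt : Aᵀ = A := by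
    rw [hAdef, Matrix.transpose_add, hBt, Matrix.transpose_smul, Matrix.transpose_one]
  have hstar : ∀ v : JIdx m n → ℝ, star v = v := fun v => funext fun p => star_trivial _
  have hBpsd : (blockDiagPart Q).PosSemidef := by
    refine Matrix.PosSemidef.of_dotProduct_mulVec_nonneg ?_ ?_
    · have h1 : (blockDiagPart Q)ᴴ = (blockDiagPart Q)ᵀ := by
        ext p q'
        simp [Matrix.conjTranspose_apply, Matrix.transpose_apply]
      rw [Matrix.IsHermitian, h1, hBt]
    · intro v
      rw [hstar v, ← quad_Pblk Q v v]
      refine Finset.sum_nonneg fun i _ => ?_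
      have := hQ.dotProduct_mulVec_nonneg (Pblk i v)
      rwa [hstar] at this
  have hcpd : (c • (1 : Matrix (JIdx m n) (JIdx m n) ℝ)).PosDef := by
    rw [Matrix.smul_one_eq_diagonal]
    exact Matrix.PosDef.diagonal (fun _ => hc)
  have hApd : A.PosDef := by
    rw [hAdef]
    exact Matrix.PosDef.posSemidef_add hBpsd hcpd
  refine ⟨hApd, ?_⟩
  intro u hu
  have hdet : IsUnit A.det := isUnit_iff_ne_zero.mpr (ne_of_gt hApd.det_pos)
  have hAxi : A *ᵥ ξ = c • flat x - (Q - blockDiagPart Q) *ᵥ flat x - (1 / 2 : ℝ) • q := by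
    rw [hxidef, Matrix.mulVec_mulVec, Matrix.mul_nonsing_inv _ hdet, Matrix.one_mulVec,
      hbdef]
  constructor
  · intro H v hv
    have h1 := H v hv
    rw [key_lemma Q hQt q c A hAdef hAt x u ξ hAxi,
      key_lemma Q hQt q c A hAdef hAt x v ξ hAxi] at h1
    exact le_of_add_le_add_right h1
  · intro H v hv
    have h1 := H v hv
    rw [key_lemma Q hQt q c A hAdef hAt x u ξ hAxi,
      key_lemma Q hQt q c A hAdef hAt x v ξ hAxi]
    exact add_le_add_left h1 _
end
end

section
/- Let c > 0 and x ∈ X, and suppose y ∈ X minimizes the function z ↦ (z − x)ᵀ(Q_d + cI)(z − x) + (z − x)ᵀ(2Qx + q) over X. Then (y − x)ᵀ(2Qx + q) ≤ −c‖y − x‖². -/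
open Matrix Filter Topology
open scoped RealInnerProductSpace

noncomputable section

/-- If `y ∈ X` minimizes `z ↦ (z − x)ᵀ(Q_d + cI)(z − x) + (z − x)ᵀ(2Qx + q)` over `X`,
then `(y − x)ᵀ(2Qx + q) ≤ −c‖y − x‖²`. -/
theorem stmt_8 {m : ℕ} {n : Fin m → ℕ}
    (X : ∀ i : Fin m, Set (EuclideanSpace ℝ (Fin (n i))))
    (hXne : ∀ i, (X i).Nonempty)
    (hXcpt : ∀ i, IsCompact (X i))
    (hXcvx : ∀ i, Convex ℝ (X i))
    (Q : Matrix (JIdx m n) (JIdx m n) ℝ) (hQ : Q.PosSemidef)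
    (q : JIdx m n → ℝ)
    (c : ℝ) (hc : 0 < c)
    (x : JVec m n) (hx : ∀ i, x i ∈ X i)
    (y : JVec m n) (hyX : ∀ i, y i ∈ X i)
    (hy : ∀ v : JVec m n, (∀ i, v i ∈ X i) →
      (flat y - flat x) ⬝ᵥ ((blockDiagPart Q + c • (1 : Matrix (JIdx m n) (JIdx m n) ℝ))
            *ᵥ (flat y - flat x))
          + (flat y - flat x) ⬝ᵥ ((2 : ℝ) • (Q *ᵥ flat x) + q) ≤
        (flat v - flat x) ⬝ᵥ ((blockDiagPart Q + c • (1 : Matrix (JIdx m n) (JIdx m n) ℝ))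
            *ᵥ (flat v - flat x))
          + (flat v - flat x) ⬝ᵥ ((2 : ℝ) • (Q *ᵥ flat x) + q)) :
    (flat y - flat x) ⬝ᵥ ((2 : ℝ) • (Q *ᵥ flat x) + q) ≤ -c * ‖y - x‖ ^ 2 := by
  have h0 := hy x hx
  set d := flat y - flat x with hd
  rw [sub_self] at h0
  simp only [Matrix.mulVec_zero, dotProduct_zero, zero_dotProduct, zero_add,
    add_zero] at h0
  have hA : d ⬝ᵥ ((blockDiagPart Q + c • (1 : Matrix (JIdx m n) (JIdx m n) ℝ)) *ᵥ d)
      = d ⬝ᵥ (blockDiagPart Q *ᵥ d) + c * (d ⬝ᵥ d) := by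
    rw [Matrix.add_mulVec, dotProduct_add, Matrix.smul_mulVec, Matrix.one_mulVec,
      dotProduct_smul, smul_eq_mul]
  have hbd : 0 ≤ d ⬝ᵥ (blockDiagPart Q *ᵥ d) := by
    have key : ∀ p r : JIdx m n,
        (∑ i : Fin m, (if p.1 = i then d p else 0) * (Q p r * if r.1 = i then d r else 0))
          = d p * ((if p.1 = r.1 then Q p r else 0) * d r) := by
      intro p r
      rw [Finset.sum_eq_single p.1]
      · rw [if_pos rfl]
        by_cases h : p.1 = r.1
        · rw [if_pos h, if_pos h.symm]
        · rw [if_neg h, if_neg (fun hh => h hh.symm)]; ring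
      · intro i _ hi
        rw [if_neg (Ne.symm hi)]
        exact zero_mul _
      · simp
    have heq : d ⬝ᵥ (blockDiagPart Q *ᵥ d)
        = ∑ i : Fin m, (star (fun p : JIdx m n => if p.1 = i then d p else 0)) ⬝ᵥ
            (Q *ᵥ (fun p : JIdx m n => if p.1 = i then d p else 0)) := by
      simp only [dotProduct, Matrix.mulVec, star_trivial, Finset.mul_sum, blockDiagPart,
        Matrix.of_apply]
      refine Eq.symm ?_
      rw [Finset.sum_comm]
      refine Finset.sum_congr rfl fun p _ => ?_
      rw [Finset.sum_comm]
      exact Finset.sum_congr rfl fun r _ => key p r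
    rw [heq]
    exact Finset.sum_nonneg fun i _ => hQ.dotProduct_mulVec_nonneg _
  have hnorm : d ⬝ᵥ d = ‖y - x‖ ^ 2 := by
    rw [PiLp.norm_sq_eq_of_L2]
    simp only [dotProduct, hd, Pi.sub_apply, flat]
    rw [show (Finset.univ : Finset (JIdx m n))
        = Finset.univ.sigma fun _ => Finset.univ from (Finset.univ_sigma_univ).symm,
      Finset.sum_sigma]
    refine Finset.sum_congr rfl fun i _ => ?_
    rw [EuclideanSpace.norm_eq, Real.sq_sqrt (by positivity)]
    refine Finset.sum_congr rfl fun j _ => ?_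
    have h2 : (y - x) i j = y i j - x i j := rfl
    rw [h2, Real.norm_eq_abs, sq_abs]
    ring
  rw [hA] at h0
  nlinarith
end
end

section
/- Let c > 0 and x ∈ X, and suppose y ∈ X minimizes the function z ↦ (z − x)ᵀ(Q_d + cI)(z − x) + (z − x)ᵀ(2Qx + q) over X. Then f(y) ≤ f(x) − (c − λ_max(Q))‖y − x‖². In particular, if c > λ_max(Q) then f(y) ≤ f(x). -/
open Matrix Filter Topology
open scoped RealInnerProductSpace

noncomputable section

section AuxLemmas

lemma rayleigh_aux' {ι : Type*} [Fintype ι] [DecidableEq ι] [Nonempty ι]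
    {A : Matrix ι ι ℝ} (hA : A.IsHermitian) (d : ι → ℝ) :
    d ⬝ᵥ (A *ᵥ d) ≤ (⨆ p, hA.eigenvalues p) * (d ⬝ᵥ d) := by
  set B : Matrix ι ι ℝ := (Matrix.IsHermitian.eigenvectorUnitary hA : Matrix ι ι ℝ) with hB
  have hstar : star B = Bᵀ := conjTranspose_eq_transpose_of_trivial B
  set w : ι → ℝ := Bᵀ *ᵥ d with hw
  have hww : w ⬝ᵥ w = d ⬝ᵥ d := by
    rw [hw, mulVec_transpose, ← dotProduct_mulVec, ← mulVec_transpose, mulVec_mulVec, ← hstar,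
      (mem_unitaryGroup_iff).mp (Matrix.IsHermitian.eigenvectorUnitary hA).2, one_mulVec]
  have hAd : d ⬝ᵥ (A *ᵥ d) = ∑ p, hA.eigenvalues p * (w p)^2 := by
    conv_lhs => rw [hA.spectral_theorem, Unitary.conjStarAlgAut_apply]
    rw [← mulVec_mulVec, ← mulVec_mulVec, dotProduct_mulVec, ← mulVec_transpose, hstar, ← hw]
    simp [dotProduct, mulVec_diagonal, sq, mul_comm, mul_left_comm]
  rw [hAd]
  have hle : ∀ p, hA.eigenvalues p ≤ ⨆ p, hA.eigenvalues p := fun p =>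
    le_ciSup (Set.Finite.bddAbove (Set.finite_range _)) p
  calc ∑ p, hA.eigenvalues p * (w p)^2
      ≤ ∑ p, (⨆ p, hA.eigenvalues p) * (w p)^2 := by
        apply Finset.sum_le_sum
        intro p _
        exact mul_le_mul_of_nonneg_right (hle p) (sq_nonneg _)
    _ = (⨆ p, hA.eigenvalues p) * (d ⬝ᵥ d) := by
        rw [← Finset.mul_sum, ← hww]
        simp [dotProduct, sq]

lemma blockDiag_nonneg' {m : ℕ} {n : Fin m → ℕ} (Q : Matrix (JIdx m n) (JIdx m n) ℝ)
    (hQ : Q.PosSemidef) (d : JIdx m n → ℝ) :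
    0 ≤ d ⬝ᵥ (blockDiagPart Q *ᵥ d) := by
  have key : d ⬝ᵥ (blockDiagPart Q *ᵥ d)
      = ∑ i : Fin m, ((fun p => if p.1 = i then d p else 0) ⬝ᵥ
          (Q *ᵥ fun p => if p.1 = i then d p else 0)) := by
    simp only [dotProduct, mulVec, dotProduct, blockDiagPart, Matrix.of_apply]
    rw [Finset.sum_comm]
    refine Finset.sum_congr rfl fun p _ => ?_
    simp only [ite_mul, zero_mul, Finset.sum_ite_eq, Finset.mem_univ, if_true]
    rw [Finset.mul_sum, Finset.mul_sum]
    refine Finset.sum_congr rfl fun r _ => ?_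
    rcases eq_or_ne p.1 r.1 with h | h
    · rw [if_pos h, if_pos h.symm]
    · rw [if_neg h, if_neg (Ne.symm h)]; ring
  rw [key]
  refine Finset.sum_nonneg fun i _ => ?_
  simpa using hQ.dotProduct_mulVec_nonneg (fun p => if p.1 = i then d p else 0)

end AuxLemmas

/-- If `y ∈ X` minimizes `z ↦ (z − x)ᵀ(Q_d + cI)(z − x) + (z − x)ᵀ(2Qx + q)` over `X`,
then `f(y) ≤ f(x) − (c − λ_max(Q))‖y − x‖²`; in particular, if `c > λ_max(Q)` then
`f(y) ≤ f(x)`. -/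

theorem stmt_9 {m : ℕ} {n : Fin m → ℕ} [Nonempty (JIdx m n)]
    (X : ∀ i : Fin m, Set (EuclideanSpace ℝ (Fin (n i))))
    (hXne : ∀ i, (X i).Nonempty)
    (hXcpt : ∀ i, IsCompact (X i))
    (hXcvx : ∀ i, Convex ℝ (X i))
    (Q : Matrix (JIdx m n) (JIdx m n) ℝ) (hQ : Q.PosSemidef)
    (q : JIdx m n → ℝ)
    (c : ℝ) (hc : 0 < c)
    (x : JVec m n) (hx : ∀ i, x i ∈ X i)
    (y : JVec m n) (hyX : ∀ i, y i ∈ X i)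
    (hy : ∀ v : JVec m n, (∀ i, v i ∈ X i) →
      (flat y - flat x) ⬝ᵥ ((blockDiagPart Q + c • (1 : Matrix (JIdx m n) (JIdx m n) ℝ))
            *ᵥ (flat y - flat x))
          + (flat y - flat x) ⬝ᵥ ((2 : ℝ) • (Q *ᵥ flat x) + q) ≤
        (flat v - flat x) ⬝ᵥ ((blockDiagPart Q + c • (1 : Matrix (JIdx m n) (JIdx m n) ℝ))
            *ᵥ (flat v - flat x))
          + (flat v - flat x) ⬝ᵥ ((2 : ℝ) • (Q *ᵥ flat x) + q)) :
    quadF Q q y ≤ quadF Q q x - (c - maxEig hQ.1) * ‖y - x‖ ^ 2 ∧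
      (maxEig hQ.1 < c → quadF Q q y ≤ quadF Q q x) := by
  classical
  set fx := flat x with hfx
  set fy := flat y with hfy
  set d : JIdx m n → ℝ := fy - fx with hd
  set lam : ℝ := maxEig hQ.1 with hlam
  -- transpose fact
  have hQT : Qᵀ = Q := by
    rw [← conjTranspose_eq_transpose_of_trivial]; exact hQ.1
  -- key inequality from optimality at v = x
  have hkey0 := hy x hx
  rw [sub_self] at hkey0
  simp only [zero_dotProduct, add_zero, zero_add] at hkey0
  have e1 : d ⬝ᵥ ((blockDiagPart Q + c • (1 : Matrix (JIdx m n) (JIdx m n) ℝ)) *ᵥ d)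
      = d ⬝ᵥ (blockDiagPart Q *ᵥ d) + c * (d ⬝ᵥ d) := by
    rw [add_mulVec, dotProduct_add, smul_mulVec, one_mulVec, dotProduct_smul,
      smul_eq_mul]
  have e2 : d ⬝ᵥ ((2 : ℝ) • (Q *ᵥ fx) + q) = 2 * (d ⬝ᵥ (Q *ᵥ fx)) + d ⬝ᵥ q := by
    rw [dotProduct_add, dotProduct_smul, smul_eq_mul]
  have hkey : d ⬝ᵥ (blockDiagPart Q *ᵥ d) + c * (d ⬝ᵥ d)
      + (2 * (d ⬝ᵥ (Q *ᵥ fx)) + d ⬝ᵥ q) ≤ 0 := by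
    rw [← e1, ← e2]; exact hkey0
  -- norm identity
  have hnorm : ‖y - x‖ ^ 2 = d ⬝ᵥ d := by
    rw [PiLp.norm_sq_eq_of_L2]
    have hblock : ∀ i : Fin m, ‖(y - x) i‖ ^ 2 = ∑ j, (y i j - x i j) ^ 2 := by
      intro i
      rw [EuclideanSpace.norm_eq, Real.sq_sqrt (by positivity)]
      refine Finset.sum_congr rfl fun j _ => ?_
      have : (y - x) i j = y i j - x i j := rfl
      rw [this, Real.norm_eq_abs, sq_abs]
    simp_rw [hblock]
    conv_rhs => rw [dotProduct, ← Finset.univ_sigma_univ, Finset.sum_sigma]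
    refine Finset.sum_congr rfl fun i _ => Finset.sum_congr rfl fun j _ => ?_
    show (y i j - x i j) ^ 2 = (y i j - x i j) * (y i j - x i j)
    rw [sq]
  -- expansion of the objective difference
  have hfyd : fy = fx + d := by rw [hd]; abel
  have h1 : fx ⬝ᵥ (Q *ᵥ d) = d ⬝ᵥ (Q *ᵥ fx) := by
    rw [dotProduct_mulVec, ← mulVec_transpose, hQT, dotProduct_comm]
  have h2 : q ⬝ᵥ d = d ⬝ᵥ q := dotProduct_comm _ _
  have hdiff : quadF Q q y = quadF Q q x
      + (d ⬝ᵥ (Q *ᵥ d) + 2 * (d ⬝ᵥ (Q *ᵥ fx)) + d ⬝ᵥ q) := by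
    show fy ⬝ᵥ (Q *ᵥ fy) + q ⬝ᵥ fy = fx ⬝ᵥ (Q *ᵥ fx) + q ⬝ᵥ fx + _
    rw [hfyd, mulVec_add]
    simp only [dotProduct_add, add_dotProduct]
    rw [h1, h2]
    ring
  -- Rayleigh bound and block-diagonal positivity
  have hray : d ⬝ᵥ (Q *ᵥ d) ≤ lam * (d ⬝ᵥ d) := rayleigh_aux' hQ.1 d
  have hbd : 0 ≤ d ⬝ᵥ (blockDiagPart Q *ᵥ d) := blockDiag_nonneg' Q hQ d
  have main : quadF Q q y ≤ quadF Q q x - (c - lam) * ‖y - x‖ ^ 2 := by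
    rw [hdiff, hnorm]; nlinarith [hkey, hray, hbd]
  refine ⟨main, fun hcl => ?_⟩
  have h0 : 0 ≤ (c - lam) * ‖y - x‖ ^ 2 :=
    mul_nonneg (by linarith) (sq_nonneg _)
  linarith
end
end

section
/- For x ∈ X define g_x : ℝ^n → ℝ by g_x(z) = Σ_{i=1}^m f(z^i, x^{-i}), where z = (z^1,…,z^m). Then for all x, y, z ∈ X, ‖∇g_x(z) − ∇g_y(z)‖ ≤ √m · L · ‖x − y‖. -/
open Matrix Filter Topology
open scoped RealInnerProductSpace

noncomputable section

variable {m : ℕ} {n : Fin m → ℕ}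

def Tmap (n : Fin m → ℕ) (i : Fin m) : JVec m n →L[ℝ] JVec m n :=
  LinearMap.toContinuousLinearMap
    { toFun := fun w => WithLp.toLp 2 (Pi.single i (w i) : ∀ j, EuclideanSpace ℝ (Fin (n j)))
      map_add' := fun a b => by
        refine PiLp.ext fun j => ?_
        by_cases h : j = i
        · subst h; simp
        · simp [Pi.single_eq_of_ne h]
      map_smul' := fun c a => by
        refine PiLp.ext fun j => ?_
        by_cases h : j = i
        · subst h; simp
        · simp [Pi.single_eq_of_ne h] }

lemma Tmap_apply (i : Fin m) (w : JVec m n) :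
    Tmap n i w = WithLp.toLp 2 (Pi.single i (w i) : ∀ j, EuclideanSpace ℝ (Fin (n j))) := rfl

lemma fderiv_inner (f : JVec m n → ℝ) (a v : JVec m n) :
    fderiv ℝ f a v = ⟪gradient f a, v⟫ := by
  rw [gradient, InnerProductSpace.toDual_apply_apply.symm,
    LinearIsometryEquiv.apply_symm_apply]

lemma grad_g (f : JVec m n → ℝ) (hf : ContDiff ℝ 1 f) (x z : JVec m n) :
    HasGradientAt (fun w : JVec m n => ∑ i : Fin m, f (upd x i (w i)))
      (WithLp.toLp 2 (fun j => gradient f (upd x j (z j)) j : ∀ j, EuclideanSpace ℝ (Fin (n j)))) z := by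
  have hdiff : Differentiable ℝ f := hf.differentiable one_ne_zero
  have hA : ∀ i : Fin m, HasFDerivAt (fun w : JVec m n => upd x i (w i)) (Tmap n i) z := by
    intro i
    have heq : (fun w : JVec m n => upd x i (w i))
        = fun w => (x - Tmap n i x) + Tmap n i w := by
      funext w
      refine PiLp.ext fun j => ?_
      by_cases h : j = i
      · subst h; simp [upd, Tmap_apply, Function.update_self]
      · simp [upd, Tmap_apply, Function.update_of_ne h, Pi.single_eq_of_ne h]
    rw [heq]
    exact (Tmap n i).hasFDerivAt.const_add _
  have hD : ∀ i : Fin m, HasFDerivAt (fun w : JVec m n => f (upd x i (w i)))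
      ((fderiv ℝ f (upd x i (z i))).comp (Tmap n i)) z := by
    intro i
    have := (hdiff (upd x i (z i))).hasFDerivAt.comp z (hA i)
    exact this
  have hsum := HasFDerivAt.sum (fun i (_ : i ∈ Finset.univ) => hD i)
  rw [hasGradientAt_iff_hasFDerivAt]
  convert hsum using 1
  case e'_8 => rfl
  case e'_9 => rfl
  case e'_11 => funext w; simp [Finset.sum_apply]
  ext v
  simp only [ContinuousLinearMap.coe_sum', Finset.sum_apply,
    ContinuousLinearMap.comp_apply, InnerProductSpace.toDual_apply_apply]
  rw [PiLp.inner_apply]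
  refine Finset.sum_congr rfl fun j _ => ?_
  rw [fderiv_inner, Tmap_apply]
  conv_rhs => rw [PiLp.inner_apply]
  rw [Finset.sum_eq_single j]
  · simp
  · intro k _ hk
    simp [Pi.single_eq_of_ne hk]
  · simp

/-- Lemma 1: for `x, y, z ∈ X`, the gradients of `g_x(w) = Σᵢ f(wⁱ, x^{-i})` and
`g_y(w) = Σᵢ f(wⁱ, y^{-i})`, both evaluated at `z`, satisfy
`‖∇g_x(z) − ∇g_y(z)‖ ≤ √m · L · ‖x − y‖`. -/
theorem stmt_10 {m : ℕ} {n : Fin m → ℕ}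
    (X : ∀ i : Fin m, Set (EuclideanSpace ℝ (Fin (n i))))
    (hXne : ∀ i, (X i).Nonempty)
    (hXcpt : ∀ i, IsCompact (X i))
    (hXcvx : ∀ i, Convex ℝ (X i))
    (f : JVec m n → ℝ)
    (hf : ContDiff ℝ 1 f)
    (hfc : ConvexOn ℝ Set.univ f)
    (L : ℝ) (hL : 0 < L)
    (hLip : ∀ a b : JVec m n, (∀ i, a i ∈ X i) → (∀ i, b i ∈ X i) →
      ‖gradient f a - gradient f b‖ ≤ L * ‖a - b‖)
    (x y z : JVec m n)
    (hx : ∀ i, x i ∈ X i) (hy : ∀ i, y i ∈ X i) (hz : ∀ i, z i ∈ X i) :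
    ‖gradient (fun w : JVec m n => ∑ i : Fin m, f (upd x i (w i))) z -
        gradient (fun w : JVec m n => ∑ i : Fin m, f (upd y i (w i))) z‖
      ≤ Real.sqrt m * L * ‖x - y‖ := by
  have hGx := (grad_g f hf x z).gradient
  have hGy := (grad_g f hf y z).gradient
  rw [hGx, hGy]
  have hmemx : ∀ j, ∀ i, upd x j (z j) i ∈ X i := by
    intro j i
    by_cases h : i = j
    · subst h; simp [upd, Function.update_self]; exact hz i
    · simpa [upd, Function.update_of_ne h] using hx i
  have hmemy : ∀ j, ∀ i, upd y j (z j) i ∈ X i := by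
    intro j i
    by_cases h : i = j
    · subst h; simp [upd, Function.update_self]; exact hz i
    · simpa [upd, Function.update_of_ne h] using hy i
  have hsub : ∀ j, ‖upd x j (z j) - upd y j (z j)‖ ≤ ‖x - y‖ := by
    intro j
    have h2 : ‖upd x j (z j) - upd y j (z j)‖ ^ 2 ≤ ‖x - y‖ ^ 2 := by
      rw [PiLp.norm_sq_eq_of_L2, PiLp.norm_sq_eq_of_L2]
      refine Finset.sum_le_sum fun k _ => ?_
      by_cases h : k = j
      · subst h
        have : (upd x k (z k) - upd y k (z k)) k = 0 := by
          simp [upd, Function.update_self]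
        rw [this]
        simpa using sq_nonneg ‖(x - y : JVec m n) k‖
      · have h1 : (upd x j (z j) - upd y j (z j)) k = x k - y k := by
          simp [upd, Function.update_of_ne h]
        have h2 : (x - y : JVec m n) k = x k - y k := rfl
        rw [h1, h2]
    calc ‖upd x j (z j) - upd y j (z j)‖
        = Real.sqrt (‖upd x j (z j) - upd y j (z j)‖ ^ 2) := by
          rw [Real.sqrt_sq (norm_nonneg _)]
      _ ≤ Real.sqrt (‖x - y‖ ^ 2) := Real.sqrt_le_sqrt h2
      _ = ‖x - y‖ := Real.sqrt_sq (norm_nonneg _)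
  have key : ∀ j : Fin m,
      ‖gradient f (upd x j (z j)) - gradient f (upd y j (z j))‖ ≤ L * ‖x - y‖ := by
    intro j
    refine (hLip _ _ (hmemx j) (hmemy j)).trans ?_
    exact mul_le_mul_of_nonneg_left (hsub j) hL.le
  set Gx : JVec m n := WithLp.toLp 2 (fun j => gradient f (upd x j (z j)) j) with hGxd
  set Gy : JVec m n := WithLp.toLp 2 (fun j => gradient f (upd y j (z j)) j) with hGyd
  have hblock : ∀ j : Fin m, ‖(Gx - Gy) j‖ ≤ L * ‖x - y‖ := by
    intro j
    have h1 : (Gx - Gy) j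
        = (gradient f (upd x j (z j)) - gradient f (upd y j (z j))) j := rfl
    rw [h1]
    refine le_trans ?_ (key j)
    have h2 : ‖(gradient f (upd x j (z j)) - gradient f (upd y j (z j))) j‖ ^ 2
        ≤ ‖gradient f (upd x j (z j)) - gradient f (upd y j (z j))‖ ^ 2 := by
      conv_rhs => rw [PiLp.norm_sq_eq_of_L2]
      exact Finset.single_le_sum
        (f := fun k => ‖(gradient f (upd x j (z j)) - gradient f (upd y j (z j))) k‖ ^ 2)
        (fun k _ => by positivity) (Finset.mem_univ j)
    calc ‖(gradient f (upd x j (z j)) - gradient f (upd y j (z j))) j‖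
        = Real.sqrt (‖(gradient f (upd x j (z j)) - gradient f (upd y j (z j))) j‖ ^ 2) := by
          rw [Real.sqrt_sq (norm_nonneg _)]
      _ ≤ Real.sqrt (‖gradient f (upd x j (z j)) - gradient f (upd y j (z j))‖ ^ 2) :=
          Real.sqrt_le_sqrt h2
      _ = _ := Real.sqrt_sq (norm_nonneg _)
  have htot : ‖Gx - Gy‖ ^ 2 ≤ m * (L * ‖x - y‖) ^ 2 := by
    rw [PiLp.norm_sq_eq_of_L2]
    calc ∑ j : Fin m, ‖(Gx - Gy) j‖ ^ 2
        ≤ ∑ _j : Fin m, (L * ‖x - y‖) ^ 2 :=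
          Finset.sum_le_sum fun j _ => pow_le_pow_left₀ (norm_nonneg _) (hblock j) 2
      _ = m * (L * ‖x - y‖) ^ 2 := by simp [Finset.sum_const, nsmul_eq_mul]
  calc ‖Gx - Gy‖ = Real.sqrt (‖Gx - Gy‖ ^ 2) := (Real.sqrt_sq (norm_nonneg _)).symm
    _ ≤ Real.sqrt ((m : ℝ) * (L * ‖x - y‖) ^ 2) := Real.sqrt_le_sqrt htot
    _ = Real.sqrt m * (L * ‖x - y‖) := by
        rw [Real.sqrt_mul (Nat.cast_nonneg m), Real.sqrt_sq (by positivity)]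
    _ = Real.sqrt m * L * ‖x - y‖ := by ring
end
end

section
/- If c > ((m−1)/(2m−1)) · √m · L, then the sequence (x_k) generated by the regularized Jacobi iteration satisfies dist(x_k, X*) → 0 as k → ∞, where X* is the (nonempty) set of minimizers of f over X. -/
open Matrix Filter Topology
open scoped RealInnerProductSpace

noncomputable section

section Aux
open Set InnerProductSpace
variable {F : Type*} [NormedAddCommGroup F] [InnerProductSpace ℝ F] [CompleteSpace F]

lemma jac_hasDerivAt_line (f : F → ℝ) (hf : Differentiable ℝ f) (a v : F) :
    HasDerivAt (fun t : ℝ => f (a + t • v)) ⟪gradient f a, v⟫ 0 := by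
  have h1 : HasFDerivAt f (toDual ℝ F (gradient f a)) (a + (0:ℝ) • v) := by
    simpa using (hf (a + (0:ℝ) • v)).hasGradientAt.hasFDerivAt
  have h2 : HasDerivAt (fun t : ℝ => a + t • v) v 0 := by
    simpa using ((hasDerivAt_id (0:ℝ)).smul_const v).const_add a
  have h3 := h1.comp_hasDerivAt (x := (0:ℝ)) h2
  rw [toDual_apply_apply] at h3
  exact h3

lemma jac_slope_tendsto {ψ : ℝ → ℝ} {d : ℝ} (h : HasDerivAt ψ d 0) :
    Tendsto (fun t => (ψ t - ψ 0) / t) (𝓝[>] (0:ℝ)) (𝓝 d) := by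
  have h2 : Tendsto (slope ψ 0) (𝓝[≠] (0:ℝ)) (𝓝 d) := hasDerivAt_iff_tendsto_slope.1 h
  have h3 := h2.mono_left
    (nhdsWithin_mono _ (fun t ht => mem_compl_singleton_iff.2 (ne_of_gt ht)))
  exact h3.congr (fun t => by simp [slope_def_field])

lemma jac_deriv_le_of_secant {ψ : ℝ → ℝ} {d C : ℝ} (h : HasDerivAt ψ d 0)
    (hub : ∀ t ∈ Set.Ioc (0:ℝ) 1, ψ t ≤ ψ 0 + t * C) : d ≤ C := by
  refine le_of_tendsto (jac_slope_tendsto h) ?_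
  filter_upwards [Ioc_mem_nhdsGT_of_mem (by constructor <;> norm_num : (0:ℝ) ∈ Ico (0:ℝ) 1)]
    with t ht
  rw [div_le_iff₀ ht.1]
  nlinarith [hub t ht, ht.1]

lemma jac_deriv_nonneg {ψ : ℝ → ℝ} {d C : ℝ} (h : HasDerivAt ψ d 0)
    (hlb : ∀ t ∈ Set.Ioc (0:ℝ) 1, ψ 0 ≤ ψ t + C * t ^ 2) : 0 ≤ d := by
  have hlim : Tendsto (fun t : ℝ => -(C * t)) (𝓝[>] (0:ℝ)) (𝓝 0) := by
    have : Tendsto (fun t : ℝ => -(C * t)) (𝓝 (0:ℝ)) (𝓝 (-(C * 0))) :=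
      (tendsto_id.const_mul C).neg
    simpa using this.mono_left nhdsWithin_le_nhds
  refine le_of_tendsto_of_tendsto hlim (jac_slope_tendsto h) ?_
  filter_upwards [Ioc_mem_nhdsGT_of_mem (by constructor <;> norm_num : (0:ℝ) ∈ Ico (0:ℝ) 1)]
    with t ht
  rw [le_div_iff₀ ht.1]
  nlinarith [hlb t ht, ht.1]

lemma jac_grad_convex {f : F → ℝ} (hf : Differentiable ℝ f) (hc : ConvexOn ℝ Set.univ f)
    (x y : F) : f x + ⟪gradient f x, y - x⟫ ≤ f y := by
  have hder := jac_hasDerivAt_line f hf x (y - x)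
  have hψ0 : f (x + (0:ℝ) • (y - x)) = f x := by norm_num
  have hub : ∀ t ∈ Set.Ioc (0:ℝ) 1,
      f (x + t • (y - x)) ≤ f (x + (0:ℝ) • (y - x)) + t * (f y - f x) := by
    intro t ht
    have h1 : x + t • (y - x) = (1 - t) • x + t • y := by module
    have h2 := hc.2 (mem_univ x) (mem_univ y) (by linarith [ht.2] : (0:ℝ) ≤ 1 - t)
      (le_of_lt ht.1) (by ring : (1 - t) + t = 1)
    rw [h1, hψ0]
    calc f ((1-t) • x + t • y) ≤ (1-t) * f x + t * f y := h2
    _ = f x + t * (f y - f x) := by ring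
  have := jac_deriv_le_of_secant hder hub
  linarith

omit [CompleteSpace F] in
lemma jac_comb_norm_sq (u v : F) (t : ℝ) :
    ‖(1 - t) • u + t • v‖ ^ 2
      = (1 - t) * ‖u‖ ^ 2 + t * ‖v‖ ^ 2 - t * (1 - t) * ‖u - v‖ ^ 2 := by
  have e : ∀ w : F, ‖w‖ ^ 2 = ⟪w, w⟫ := fun w => (real_inner_self_eq_norm_sq w).symm
  simp only [e, inner_add_add_self, inner_sub_sub_self, real_inner_smul_left,
    real_inner_smul_right]
  ring

end Aux

section PiLpAux
variable {m : ℕ} {n : Fin m → ℕ}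

/-- embedding of the `i`-th block -/
def emb (i : Fin m) (v : EuclideanSpace ℝ (Fin (n i))) : JVec m n := WithLp.toLp 2 (Pi.single i v)

lemma emb_apply_self (i : Fin m) (v : EuclideanSpace ℝ (Fin (n i))) : emb i v i = v := by
  simp [emb]

lemma emb_apply_ne (i j : Fin m) (v : EuclideanSpace ℝ (Fin (n i))) (h : j ≠ i) :
    emb i v j = 0 := by simp [emb, Pi.single_eq_of_ne h]

lemma emb_smul (i : Fin m) (v : EuclideanSpace ℝ (Fin (n i))) (t : ℝ) :
    emb i (t • v) = t • emb i v := by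
  refine PiLp.ext fun j => ?_
  rcases eq_or_ne j i with rfl | hj
  · simp [emb]
  · show emb i (t • v) j = t • (emb i v j)
    rw [emb_apply_ne _ _ _ hj, emb_apply_ne _ _ _ hj, smul_zero]

lemma emb_sub (i : Fin m) (v w : EuclideanSpace ℝ (Fin (n i))) :
    emb i (v - w) = emb i v - emb i w := by
  refine PiLp.ext fun j => ?_
  rcases eq_or_ne j i with rfl | hj
  · simp [emb]
  · show emb i (v - w) j = emb i v j - emb i w j
    rw [emb_apply_ne _ _ _ hj, emb_apply_ne _ _ _ hj, emb_apply_ne _ _ _ hj, sub_zero]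

lemma jac_upd_eq (x : JVec m n) (i : Fin m) (z : EuclideanSpace ℝ (Fin (n i))) :
    upd x i z = x + emb i (z - x i) := by
  refine PiLp.ext fun j => ?_
  rcases eq_or_ne j i with rfl | hj
  · simp [upd, emb]
  · show Function.update x.ofLp i z j = x j + emb i (z - x i) j
    rw [Function.update_of_ne hj, emb_apply_ne _ _ _ hj, add_zero]

lemma jac_inner_single (g : JVec m n) (i : Fin m) (v : EuclideanSpace ℝ (Fin (n i))) :
    ⟪g, emb i v⟫ = ⟪g i, v⟫ := by
  rw [PiLp.inner_apply]
  rw [Finset.sum_eq_single i]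
  · rw [emb_apply_self]
  · intro j _ hj
    rw [emb_apply_ne _ _ _ hj, inner_zero_right]
  · simp

lemma jac_norm_sq_blocks (a : JVec m n) : ‖a‖ ^ 2 = ∑ i, ‖a i‖ ^ 2 :=
  PiLp.norm_sq_eq_of_L2 _ a

lemma jac_norm_apply_le (a : JVec m n) (i : Fin m) : ‖a i‖ ≤ ‖a‖ := by
  have h1 : ‖a i‖ ^ 2 ≤ ‖a‖ ^ 2 := by
    rw [jac_norm_sq_blocks]
    exact Finset.single_le_sum (f := fun j => ‖a j‖ ^ 2)
      (fun j _ => sq_nonneg _) (Finset.mem_univ i)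
  nlinarith [norm_nonneg (a i), norm_nonneg a]

lemma jac_upd_combo (x : JVec m n) (i : Fin m) (a b : EuclideanSpace ℝ (Fin (n i))) (t : ℝ) :
    upd x i ((1 - t) • a + t • b) = (1 - t) • upd x i a + t • upd x i b := by
  refine PiLp.ext fun j => ?_
  rcases eq_or_ne j i with rfl | hj
  · simp [upd]
  · show Function.update x.ofLp i _ j
      = (1 - t) • (Function.update x.ofLp i a j) + t • (Function.update x.ofLp i b j)
    rw [Function.update_of_ne hj, Function.update_of_ne hj, Function.update_of_ne hj]
    module

lemma jac_compact (X : ∀ i : Fin m, Set (EuclideanSpace ℝ (Fin (n i))))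
    (hXcpt : ∀ i, IsCompact (X i)) :
    IsCompact {y : JVec m n | ∀ i, y i ∈ X i} := by
  have h1 : IsCompact (Set.univ.pi X) := isCompact_univ_pi hXcpt
  have h2 : {y : JVec m n | ∀ i, y i ∈ X i}
      = (WithLp.equiv 2 (∀ i, EuclideanSpace ℝ (Fin (n i)))).symm '' (Set.univ.pi X) := by
    ext y
    constructor
    · intro h; exact ⟨y.ofLp, fun i _ => h i, rfl⟩
    · rintro ⟨w, hw, rfl⟩; exact fun i => hw i (Set.mem_univ i)
  rw [h2]
  exact h1.image (PiLp.continuous_toLp 2 _)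

lemma jac_sub_apply (a b : JVec m n) (i : Fin m) : (a - b) i = a i - b i := rfl

lemma jac_upd_self (x : JVec m n) (i : Fin m) : upd x i (x i) = x :=
  congrArg (WithLp.toLp 2) (Function.update_eq_self i x.ofLp)

lemma jac_tendsto_apply {u : ℕ → JVec m n} {l : JVec m n}
    (h : Tendsto u atTop (𝓝 l)) (i : Fin m) :
    Tendsto (fun j => u j i) atTop (𝓝 (l i)) := by
  rw [tendsto_iff_norm_sub_tendsto_zero] at h ⊢
  refine squeeze_zero (fun j => norm_nonneg _) (fun j => ?_) h
  have := jac_norm_apply_le (u j - l) i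
  rwa [jac_sub_apply] at this

lemma jac_tendsto_emb {i : Fin m} {u : ℕ → EuclideanSpace ℝ (Fin (n i))}
    {l : EuclideanSpace ℝ (Fin (n i))} (h : Tendsto u atTop (𝓝 l)) :
    Tendsto (fun j => (emb i (u j) : JVec m n)) atTop (𝓝 (emb i l)) := by
  rw [tendsto_iff_norm_sub_tendsto_zero] at h ⊢
  refine squeeze_zero (fun j => norm_nonneg _) (fun j => ?_) h
  rw [← emb_sub]
  have h1 : ‖(emb i (u j - l) : JVec m n)‖ ^ 2 = ‖u j - l‖ ^ 2 := by
    rw [jac_norm_sq_blocks, Finset.sum_eq_single i]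
    · rw [emb_apply_self]
    · intro j' _ hj'; rw [emb_apply_ne _ _ _ hj', norm_zero]; norm_num
    · simp
  nlinarith [norm_nonneg (emb i (u j - l) : JVec m n), norm_nonneg (u j - l)]

end PiLpAux
set_option maxHeartbeats 1000000 in
/-- Theorem 2: if `c > ((m−1)/(2m−1))·√m·L`, the regularized Jacobi iterates satisfy
`dist(x_k, X*) → 0`, where `X*` is the (nonempty) set of minimizers of `f` over `X`. -/
theorem stmt_11 {m : ℕ} {n : Fin m → ℕ} (hm : 0 < m)
    (X : ∀ i : Fin m, Set (EuclideanSpace ℝ (Fin (n i))))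
    (hXne : ∀ i, (X i).Nonempty)
    (hXcpt : ∀ i, IsCompact (X i))
    (hXcvx : ∀ i, Convex ℝ (X i))
    (f : JVec m n → ℝ)
    (hf : ContDiff ℝ 1 f)
    (hfc : ConvexOn ℝ Set.univ f)
    (L : ℝ) (hL : 0 < L)
    (hLip : ∀ a b : JVec m n, (∀ i, a i ∈ X i) → (∀ i, b i ∈ X i) →
      ‖gradient f a - gradient f b‖ ≤ L * ‖a - b‖)
    (c : ℝ) (hc : ((m : ℝ) - 1) / (2 * m - 1) * (Real.sqrt m * L) < c)
    (x : ℕ → JVec m n) (hx0 : ∀ i, x 0 i ∈ X i)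
    (hrec : ∀ k : ℕ, ∀ i : Fin m, x (k + 1) i ∈ X i ∧
      ∀ z ∈ X i,
        f (upd (x k) i (x (k + 1) i)) + c * ‖x (k + 1) i - x k i‖ ^ 2 ≤
          f (upd (x k) i z) + c * ‖z - x k i‖ ^ 2) :
    ({y : JVec m n | (∀ i, y i ∈ X i) ∧
        ∀ w : JVec m n, (∀ i, w i ∈ X i) → f y ≤ f w}).Nonempty ∧
      Tendsto (fun k : ℕ => Metric.infDist (x k)
        {y : JVec m n | (∀ i, y i ∈ X i) ∧
          ∀ w : JVec m n, (∀ i, w i ∈ X i) → f y ≤ f w}) atTop (𝓝 0) := by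
  classical
  set S := {y : JVec m n | (∀ i, y i ∈ X i) ∧
      ∀ w : JVec m n, (∀ i, w i ∈ X i) → f y ≤ f w} with hSdef
  set XX := {y : JVec m n | ∀ i, y i ∈ X i} with hXXdef
  have hXXcpt : IsCompact XX := jac_compact X hXcpt
  have hXXne : XX.Nonempty := ⟨WithLp.toLp 2 (fun i => (hXne i).choose), fun i => (hXne i).choose_spec⟩
  have hfcont : Continuous f := hf.continuous
  obtain ⟨ystar, hystarX, hystarmin⟩ := hXXcpt.exists_isMinOn hXXne hfcont.continuousOn
  have hystar : ∀ w, (∀ i, w i ∈ X i) → f ystar ≤ f w :=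
    fun w hw => isMinOn_iff.1 hystarmin w hw
  have hSne : S.Nonempty := ⟨ystar, hystarX, hystar⟩
  refine ⟨hSne, ?_⟩
  have hdiff : Differentiable ℝ f := hf.differentiable one_ne_zero
  -- iterates stay in X
  have hxX : ∀ k i, x k i ∈ X i := by
    intro k
    induction k with
    | zero => exact hx0
    | succ k ih => exact fun i => (hrec k i).1
  -- numeric facts
  have hM : (1:ℝ) ≤ (m:ℝ) := by exact_mod_cast hm
  have hs : (1:ℝ) ≤ Real.sqrt m := by
    have := Real.sqrt_le_sqrt hM
    simpa using this
  have h2M : (0:ℝ) < 2 * (m:ℝ) - 1 := by linarith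
  have hc' : ((m:ℝ) - 1) * (Real.sqrt m * L) < c * (2 * m - 1) := by
    rw [div_mul_eq_mul_div, div_lt_iff₀ h2M] at hc; exact hc
  have hc0 : (0:ℝ) < c := by
    by_contra h
    push_neg at h
    nlinarith [mul_nonneg (mul_nonneg (by linarith : (0:ℝ) ≤ (m:ℝ) - 1)
      (by linarith : (0:ℝ) ≤ Real.sqrt m)) hL.le]
  set ρ : ℝ := (2 * c * (m:ℝ) - ((m:ℝ) - 1) * L) / m with hρdef
  have hm0 : (0:ℝ) < (m:ℝ) := by linarith
  have hρ : 0 < ρ := by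
    apply div_pos _ hm0
    nlinarith [mul_nonneg (mul_nonneg (by linarith : (0:ℝ) ≤ (m:ℝ) - 1) hL.le)
      (by linarith : (0:ℝ) ≤ Real.sqrt m - 1)]
  -- Key A : strengthened optimality inequality
  have keyA : ∀ k (i : Fin m), ∀ z ∈ X i,
      f (upd (x k) i (x (k+1) i)) + c * ‖x (k+1) i - x k i‖ ^ 2
          + c * ‖z - x (k+1) i‖ ^ 2
        ≤ f (upd (x k) i z) + c * ‖z - x k i‖ ^ 2 := by
    intro k i z hz
    have hstep : ∀ t ∈ Set.Ioc (0:ℝ) 1,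
        f (upd (x k) i (x (k+1) i)) + c * ‖x (k+1) i - x k i‖ ^ 2
            + c * (1 - t) * ‖z - x (k+1) i‖ ^ 2
          ≤ f (upd (x k) i z) + c * ‖z - x k i‖ ^ 2 := by
      intro t ht
      have hzt : (1 - t) • x (k+1) i + t • z ∈ X i :=
        (hXcvx i) ((hrec k i).1) hz (by linarith [ht.2]) ht.1.le (by ring)
      have hrec2 := (hrec k i).2 _ hzt
      have hfpart : f (upd (x k) i ((1 - t) • x (k+1) i + t • z))
          ≤ (1 - t) * f (upd (x k) i (x (k+1) i)) + t * f (upd (x k) i z) := by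
        rw [jac_upd_combo]
        exact hfc.2 (Set.mem_univ _) (Set.mem_univ _) (by linarith [ht.2]) ht.1.le (by ring)
      have hnpart : ‖((1 - t) • x (k+1) i + t • z) - x k i‖ ^ 2
          = (1 - t) * ‖x (k+1) i - x k i‖ ^ 2 + t * ‖z - x k i‖ ^ 2
            - t * (1 - t) * ‖x (k+1) i - z‖ ^ 2 := by
        rw [show ((1 - t) • x (k+1) i + t • z) - x k i
            = (1 - t) • (x (k+1) i - x k i) + t • (z - x k i) by module]
        rw [jac_comb_norm_sq]
        rw [show (x (k+1) i - x k i) - (z - x k i) = x (k+1) i - z by abel]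
      rw [hnpart] at hrec2
      rw [norm_sub_rev z (x (k+1) i)]
      have hcomb : t * (f (upd (x k) i (x (k+1) i)) + c * ‖x (k+1) i - x k i‖ ^ 2
            + c * (1 - t) * ‖x (k+1) i - z‖ ^ 2)
          ≤ t * (f (upd (x k) i z) + c * ‖z - x k i‖ ^ 2) := by nlinarith [hrec2, hfpart]
      exact le_of_mul_le_mul_left hcomb ht.1
    have hlim : Tendsto (fun t : ℝ => f (upd (x k) i (x (k+1) i))
          + c * ‖x (k+1) i - x k i‖ ^ 2 + c * (1 - t) * ‖z - x (k+1) i‖ ^ 2)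
        (𝓝[>] (0:ℝ))
        (𝓝 (f (upd (x k) i (x (k+1) i)) + c * ‖x (k+1) i - x k i‖ ^ 2
          + c * ‖z - x (k+1) i‖ ^ 2)) := by
      have hcont : Continuous (fun t : ℝ => f (upd (x k) i (x (k+1) i))
          + c * ‖x (k+1) i - x k i‖ ^ 2 + c * (1 - t) * ‖z - x (k+1) i‖ ^ 2) := by
        fun_prop
      have h1 : Tendsto (fun t : ℝ => f (upd (x k) i (x (k+1) i))
          + c * ‖x (k+1) i - x k i‖ ^ 2 + c * (1 - t) * ‖z - x (k+1) i‖ ^ 2)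
          (𝓝[>] (0:ℝ))
          (𝓝 (f (upd (x k) i (x (k+1) i)) + c * ‖x (k+1) i - x k i‖ ^ 2
            + c * (1 - 0) * ‖z - x (k+1) i‖ ^ 2)) :=
        (hcont.tendsto 0).mono_left nhdsWithin_le_nhds
      norm_num at h1
      exact h1
    refine le_of_tendsto hlim ?_
    filter_upwards [Ioc_mem_nhdsGT_of_mem
      (by constructor <;> norm_num : (0:ℝ) ∈ Set.Ico (0:ℝ) 1)] with t ht
    exact hstep t ht
  -- Key B : sufficient descent
  have keyB : ∀ k, f (x (k+1)) + ρ * ‖x (k+1) - x k‖ ^ 2 ≤ f (x k) := by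
    intro k
    have hdsq : ‖x (k+1) - x k‖ ^ 2 = ∑ i, ‖x (k+1) i - x k i‖ ^ 2 := by
      rw [jac_norm_sq_blocks]
      exact Finset.sum_congr rfl fun i _ => by rw [jac_sub_apply]
    have hyi : ∀ i, f (upd (x k) i (x (k+1) i))
        ≤ f (x k) - 2 * c * ‖x (k+1) i - x k i‖ ^ 2 := by
      intro i
      have h1 := keyA k i (x k i) (hxX k i)
      rw [jac_upd_self, sub_self, norm_zero] at h1
      have h2 : ‖x k i - x (k+1) i‖ ^ 2 = ‖x (k+1) i - x k i‖ ^ 2 := by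
        rw [norm_sub_rev]
      rw [h2] at h1
      norm_num at h1
      linarith
    have hg0 : ⟪gradient f (x k), x (k+1) - x k⟫ ≤ -(2*c) * ‖x (k+1) - x k‖ ^ 2 := by
      have h1 : ∀ i, ⟪gradient f (x k) i, x (k+1) i - x k i⟫
          ≤ -(2*c) * ‖x (k+1) i - x k i‖ ^ 2 := by
        intro i
        have hgc := jac_grad_convex hdiff hfc (x k) (upd (x k) i (x (k+1) i))
        rw [jac_upd_eq (x k) i (x (k+1) i), add_sub_cancel_left, jac_inner_single] at hgc
        have h3 := hyi i
        rw [jac_upd_eq] at h3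
        linarith
      calc ⟪gradient f (x k), x (k+1) - x k⟫
          = ∑ i, ⟪gradient f (x k) i, x (k+1) i - x k i⟫ := PiLp.inner_apply _ _
        _ ≤ ∑ i, -(2*c) * ‖x (k+1) i - x k i‖ ^ 2 :=
            Finset.sum_le_sum (fun i _ => h1 i)
        _ = -(2*c) * ‖x (k+1) - x k‖ ^ 2 := by rw [hdsq, Finset.mul_sum]
    have hgd : ⟪gradient f (x (k+1)), x (k+1) - x k⟫ ≤ (L - 2*c) * ‖x (k+1) - x k‖ ^ 2 := by
      have h2 : ⟪gradient f (x (k+1)) - gradient f (x k), x (k+1) - x k⟫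
          ≤ L * ‖x (k+1) - x k‖ ^ 2 := by
        calc ⟪gradient f (x (k+1)) - gradient f (x k), x (k+1) - x k⟫
            ≤ ‖gradient f (x (k+1)) - gradient f (x k)‖ * ‖x (k+1) - x k‖ :=
              real_inner_le_norm _ _
          _ ≤ (L * ‖x (k+1) - x k‖) * ‖x (k+1) - x k‖ :=
              mul_le_mul_of_nonneg_right
                (hLip _ _ (fun i => hxX (k+1) i) (fun i => hxX k i)) (norm_nonneg _)
          _ = L * ‖x (k+1) - x k‖ ^ 2 := by ring
      have h3 : ⟪gradient f (x (k+1)), x (k+1) - x k⟫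
          = ⟪gradient f (x (k+1)) - gradient f (x k), x (k+1) - x k⟫
            + ⟪gradient f (x k), x (k+1) - x k⟫ := by
        rw [inner_sub_left]; ring
      linarith [hg0]
    have hsum : (m:ℝ) * f (x (k+1))
        ≤ (∑ i, f (upd (x k) i (x (k+1) i)))
          + ((m:ℝ) - 1) * ⟪gradient f (x (k+1)), x (k+1) - x k⟫ := by
      have h4 : ∀ i, f (x (k+1)) ≤ f (upd (x k) i (x (k+1) i))
          + (⟪gradient f (x (k+1)), x (k+1) - x k⟫
            - ⟪gradient f (x (k+1)) i, x (k+1) i - x k i⟫) := by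
        intro i
        have hgc := jac_grad_convex hdiff hfc (x (k+1)) (upd (x k) i (x (k+1) i))
        have he : (upd (x k) i (x (k+1) i)) - x (k+1)
            = emb i (x (k+1) i - x k i) - (x (k+1) - x k) := by
          rw [jac_upd_eq]; abel
        rw [he, inner_sub_right, jac_inner_single] at hgc
        linarith
      have h5 : ∑ i, ⟪gradient f (x (k+1)) i, x (k+1) i - x k i⟫
          = ⟪gradient f (x (k+1)), x (k+1) - x k⟫ := (PiLp.inner_apply (𝕜 := ℝ) (gradient f (x (k+1))) (x (k+1) - x k)).symm
      calc (m:ℝ) * f (x (k+1)) = ∑ _i : Fin m, f (x (k+1)) := by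
            rw [Finset.sum_const, Finset.card_univ, Fintype.card_fin, nsmul_eq_mul]
        _ ≤ ∑ i, (f (upd (x k) i (x (k+1) i))
            + (⟪gradient f (x (k+1)), x (k+1) - x k⟫
              - ⟪gradient f (x (k+1)) i, x (k+1) i - x k i⟫)) :=
            Finset.sum_le_sum (fun i _ => h4 i)
        _ = (∑ i, f (upd (x k) i (x (k+1) i)))
            + ((m:ℝ) * ⟪gradient f (x (k+1)), x (k+1) - x k⟫
              - ∑ i, ⟪gradient f (x (k+1)) i, x (k+1) i - x k i⟫) := by
            rw [Finset.sum_add_distrib, Finset.sum_sub_distrib, Finset.sum_const,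
              Finset.card_univ, Fintype.card_fin, nsmul_eq_mul]
        _ = (∑ i, f (upd (x k) i (x (k+1) i)))
            + ((m:ℝ) - 1) * ⟪gradient f (x (k+1)), x (k+1) - x k⟫ := by
            rw [h5]; ring
    have hsumy : ∑ i, f (upd (x k) i (x (k+1) i))
        ≤ (m:ℝ) * f (x k) - 2 * c * ‖x (k+1) - x k‖ ^ 2 := by
      calc ∑ i, f (upd (x k) i (x (k+1) i))
          ≤ ∑ i, (f (x k) - 2 * c * ‖x (k+1) i - x k i‖ ^ 2) :=
            Finset.sum_le_sum (fun i _ => hyi i)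
        _ = (m:ℝ) * f (x k) - 2 * c * ‖x (k+1) - x k‖ ^ 2 := by
            rw [Finset.sum_sub_distrib, Finset.sum_const, Finset.card_univ,
              Fintype.card_fin, nsmul_eq_mul, hdsq, Finset.mul_sum]
    have hfinal : (m:ℝ) * f (x (k+1))
        ≤ (m:ℝ) * f (x k) - 2 * c * ‖x (k+1) - x k‖ ^ 2
          + ((m:ℝ) - 1) * ((L - 2*c) * ‖x (k+1) - x k‖ ^ 2) := by
      have h6 := mul_le_mul_of_nonneg_left hgd (by linarith : (0:ℝ) ≤ (m:ℝ) - 1)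
      linarith [hsum, hsumy]
    have h7 : ρ * ‖x (k+1) - x k‖ ^ 2 ≤ f (x k) - f (x (k+1)) := by
      rw [hρdef, div_mul_eq_mul_div, div_le_iff₀ hm0]
      nlinarith [hfinal]
    linarith
  -- step 3 : successive differences tend to zero
  have hd0 : Tendsto (fun k => ‖x (k+1) - x k‖) atTop (𝓝 0) := by
    have hmono : Antitone (fun k => f (x k)) := by
      apply antitone_nat_of_succ_le
      intro k
      have := keyB k
      nlinarith [mul_nonneg hρ.le (sq_nonneg ‖x (k+1) - x k‖)]
    have hbdd : BddBelow (Set.range (fun k => f (x k))) := by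
      refine ⟨f ystar, ?_⟩
      rintro v ⟨k, rfl⟩
      exact hystar _ (fun i => hxX k i)
    have hA : Tendsto (fun k => f (x k)) atTop (𝓝 (⨅ k, f (x k))) :=
      tendsto_atTop_ciInf hmono hbdd
    have hdiff0 : Tendsto (fun k => f (x k) - f (x (k+1))) atTop (𝓝 0) := by
      have h2 : Tendsto (fun k => f (x (k+1))) atTop (𝓝 (⨅ k, f (x k))) :=
        hA.comp (tendsto_add_atTop_nat 1)
      simpa using hA.sub h2
    have hsq : Tendsto (fun k => ‖x (k+1) - x k‖ ^ 2) atTop (𝓝 0) := by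
      have hle : ∀ k, ‖x (k+1) - x k‖ ^ 2 ≤ ρ⁻¹ * (f (x k) - f (x (k+1))) := by
        intro k
        rw [inv_mul_eq_div, le_div_iff₀ hρ]
        nlinarith [keyB k]
      refine squeeze_zero (fun k => sq_nonneg _) hle ?_
      simpa using hdiff0.const_mul ρ⁻¹
    have := (Real.continuous_sqrt.tendsto 0).comp hsq
    have heq : (fun k => Real.sqrt (‖x (k+1) - x k‖ ^ 2))
        = fun k => ‖x (k+1) - x k‖ := funext fun k => Real.sqrt_sq (norm_nonneg _)
    rw [show Real.sqrt 0 = 0 from Real.sqrt_zero] at this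
    rw [← heq]
    exact this
  -- final step: convergence of distances, by contradiction
  refine Metric.tendsto_atTop.2 ?_
  intro ε hε
  by_contra hcon
  push_neg at hcon
  have hfreq : ∃ᶠ k in atTop, ε ≤ Metric.infDist (x k) S := by
    rw [frequently_atTop]
    intro N
    obtain ⟨k, hk1, hk2⟩ := hcon N
    refine ⟨k, hk1, ?_⟩
    rwa [Real.dist_0_eq_abs, abs_of_nonneg Metric.infDist_nonneg] at hk2
  obtain ⟨φ, hφmono, hφ⟩ := Filter.extraction_of_frequently_atTop hfreq
  obtain ⟨xb, hxbX, ψ, hψmono, hψtend⟩ :=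
    hXXcpt.tendsto_subseq (x := fun j => x (φ j)) (fun j => (fun i => hxX (φ j) i))
  set K := fun j => φ (ψ j) with hKdef
  have hKmono : StrictMono K := hφmono.comp hψmono
  have hK1 : Tendsto (fun j => x (K j)) atTop (𝓝 xb) := hψtend
  have hK2 : Tendsto (fun j => x (K j + 1)) atTop (𝓝 xb) := by
    have h8 : Tendsto (fun j => x (K j + 1) - x (K j)) atTop (𝓝 0) := by
      rw [tendsto_zero_iff_norm_tendsto_zero]
      exact hd0.comp hKmono.tendsto_atTop
    simpa using hK1.add h8
  have hK1i : ∀ i, Tendsto (fun j => x (K j) i) atTop (𝓝 (xb i)) :=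
    fun i => jac_tendsto_apply hK1 i
  have hK2i : ∀ i, Tendsto (fun j => x (K j + 1) i) atTop (𝓝 (xb i)) :=
    fun i => jac_tendsto_apply hK2 i
  -- the limit point is a fixed point of the regularized best response
  have hfix : ∀ i, ∀ z ∈ X i, f xb ≤ f (upd xb i z) + c * ‖z - xb i‖ ^ 2 := by
    intro i z hz
    have hu : Tendsto (fun j => upd (x (K j)) i (x (K j + 1) i)) atTop (𝓝 xb) := by
      have h9 : Tendsto (fun j => x (K j) + emb i (x (K j + 1) i - x (K j) i))
          atTop (𝓝 (xb + emb i (xb i - xb i))) :=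
        hK1.add (jac_tendsto_emb ((hK2i i).sub (hK1i i)))
      simp only [sub_self] at h9
      have h10 : (emb i (0 : EuclideanSpace ℝ (Fin (n i))) : JVec m n) = 0 := by
        simp [emb]
      rw [h10, add_zero] at h9
      refine h9.congr (fun j => ?_)
      rw [jac_upd_eq]
    have hA2 : Tendsto (fun j => f (upd (x (K j)) i (x (K j + 1) i))) atTop (𝓝 (f xb)) :=
      (hfcont.tendsto xb).comp hu
    have hu2 : Tendsto (fun j => upd (x (K j)) i z) atTop (𝓝 (upd xb i z)) := by
      have h9 : Tendsto (fun j => x (K j) + emb i (z - x (K j) i))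
          atTop (𝓝 (xb + emb i (z - xb i))) :=
        hK1.add (jac_tendsto_emb (tendsto_const_nhds.sub (hK1i i)))
      rw [jac_upd_eq]
      exact h9.congr (fun j => (jac_upd_eq _ _ _).symm)
    have hB2 : Tendsto (fun j => f (upd (x (K j)) i z) + c * ‖z - x (K j) i‖ ^ 2)
        atTop (𝓝 (f (upd xb i z) + c * ‖z - xb i‖ ^ 2)) := by
      have hn : Tendsto (fun j => c * ‖z - x (K j) i‖ ^ 2) atTop (𝓝 (c * ‖z - xb i‖ ^ 2)) :=
        ((tendsto_const_nhds.sub (hK1i i)).norm.pow 2).const_mul c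
      exact ((hfcont.tendsto _).comp hu2).add hn
    refine le_of_tendsto_of_tendsto hA2 hB2 (Filter.Eventually.of_forall fun j => ?_)
    have h11 := (hrec (K j) i).2 z hz
    have h12 : (0:ℝ) ≤ c * ‖x (K j + 1) i - x (K j) i‖ ^ 2 :=
      mul_nonneg hc0.le (sq_nonneg _)
    show f (upd (x (K j)) i (x (K j + 1) i))
      ≤ f (upd (x (K j)) i z) + c * ‖z - x (K j) i‖ ^ 2
    linarith
  -- blockwise first-order optimality of the limit point
  have hblock : ∀ i, ∀ z ∈ X i, (0:ℝ) ≤ ⟪gradient f xb i, z - xb i⟫ := by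
    intro i z hz
    have hψder := jac_hasDerivAt_line f hdiff xb (emb i (z - xb i))
    have h9 : (0:ℝ) ≤ ⟪gradient f xb, emb i (z - xb i)⟫ := by
      refine jac_deriv_nonneg (C := c * ‖z - xb i‖ ^ 2) hψder ?_
      intro t ht
      have hzt : (1 - t) • xb i + t • z ∈ X i :=
        (hXcvx i) (hxbX i) hz (by linarith [ht.2]) ht.1.le (by ring)
      have h10 := hfix i _ hzt
      have h11 : upd xb i ((1 - t) • xb i + t • z) = xb + t • emb i (z - xb i) := by
        rw [jac_upd_eq, show ((1 - t) • xb i + t • z) - xb i = t • (z - xb i) by module,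
          emb_smul]
      have h12 : ‖((1 - t) • xb i + t • z) - xb i‖ ^ 2 = t ^ 2 * ‖z - xb i‖ ^ 2 := by
        rw [show ((1 - t) • xb i + t • z) - xb i = t • (z - xb i) by module, norm_smul]
        rw [mul_pow, Real.norm_eq_abs, sq_abs]
      rw [h11, h12] at h10
      show f (xb + (0:ℝ) • emb i (z - xb i))
        ≤ f (xb + t • emb i (z - xb i)) + c * ‖z - xb i‖ ^ 2 * t ^ 2
      rw [zero_smul, add_zero]
      linarith
    rwa [jac_inner_single] at h9
  have hder2 : ∀ w : JVec m n, (∀ i, w i ∈ X i) → (0:ℝ) ≤ ⟪gradient f xb, w - xb⟫ := by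
    intro w hw
    have h13 : ⟪gradient f xb, w - xb⟫ = ∑ i, ⟪gradient f xb i, w i - xb i⟫ :=
      PiLp.inner_apply _ _
    rw [h13]
    exact Finset.sum_nonneg fun i _ => hblock i (w i) (hw i)
  have hxbS : xb ∈ S := by
    refine ⟨hxbX, fun w hw => ?_⟩
    have h14 := jac_grad_convex hdiff hfc xb w
    linarith [hder2 w hw]
  have h15 : Tendsto (fun j => dist (x (K j)) xb) atTop (𝓝 0) :=
    tendsto_iff_dist_tendsto_zero.1 hK1
  obtain ⟨j, hj⟩ := (h15.eventually (gt_mem_nhds hε)).exists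
  have h16 := hφ (ψ j)
  have h17 : Metric.infDist (x (K j)) S ≤ dist (x (K j)) xb :=
    Metric.infDist_le_dist_of_mem hxbS
  exact absurd (le_trans h16 h17) (not_le.2 hj)
end
end

section
/- Let c > 0, x ∈ X, and for each i = 1,…,m let u^i ∈ X^i minimize z^i ↦ f(z^i, x^{-i}) + c‖z^i − x^i‖² over X^i; set u = (u^1,…,u^m). Then m · f(u) ≤ m · f(x) − c‖u − x‖² + (m−1)(u − x)ᵀ∇f(u). -/
open Matrix Filter Topology
open scoped RealInnerProductSpace

noncomputable section

lemma grad_convex_le {F : Type*} [NormedAddCommGroup F] [InnerProductSpace ℝ F]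
    [CompleteSpace F] {f : F → ℝ} (hf : Differentiable ℝ f)
    (hfc : ConvexOn ℝ Set.univ f) (u y : F) :
    f u + ⟪gradient f u, y - u⟫ ≤ f y := by
  set φ : ℝ → ℝ := fun t => f (AffineMap.lineMap u y t) with hφ
  have hφc : ConvexOn ℝ Set.univ φ := by
    have := hfc.comp_affineMap (AffineMap.lineMap u y (k := ℝ))
    change ConvexOn ℝ _ φ at this
    simpa [Set.preimage_univ, Function.comp] using this
  have hcurve : HasDerivAt (fun t : ℝ => AffineMap.lineMap u y t) (y - u) 0 := by
    have h : HasDerivAt (fun t : ℝ => t • (y - u) + u) ((1 : ℝ) • (y - u)) 0 :=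
      ((hasDerivAt_id (0 : ℝ)).smul_const (y - u)).add_const u
    simpa [AffineMap.lineMap_apply, one_smul] using h
  have hgrad : HasFDerivAt f (InnerProductSpace.toDual ℝ F (gradient f u)) u :=
    (hf u).hasGradientAt.hasFDerivAt
  have hφd : HasDerivAt φ ⟪gradient f u, y - u⟫ 0 := by
    have h0 : (AffineMap.lineMap u y (0 : ℝ)) = u := by
      simp [AffineMap.lineMap_apply]
    have := (h0 ▸ hgrad).comp_hasDerivAt 0 hcurve
    change HasDerivAt φ _ 0 at this
    simpa [InnerProductSpace.toDual_apply_apply] using this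
  have hs := hφc.le_slope_of_hasDerivAt (Set.mem_univ (0 : ℝ)) (Set.mem_univ (1 : ℝ))
    one_pos hφd
  have hφ0 : φ 0 = f u := by simp [hφ, AffineMap.lineMap_apply]
  have hφ1 : φ 1 = f y := by simp [hφ, AffineMap.lineMap_apply]
  have : ⟪gradient f u, y - u⟫ ≤ f y - f u := by
    simpa [slope, hφ0, hφ1] using hs
  linarith


/-- If each `uⁱ ∈ Xⁱ` minimizes `zⁱ ↦ f(zⁱ, x^{-i}) + c‖zⁱ − xⁱ‖²` over `Xⁱ`, then
`m f(u) ≤ m f(x) − c‖u − x‖² + (m−1)(u − x)ᵀ∇f(u)`. -/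
theorem stmt_16 {m : ℕ} {n : Fin m → ℕ}
    (X : ∀ i : Fin m, Set (EuclideanSpace ℝ (Fin (n i))))
    (hXne : ∀ i, (X i).Nonempty)
    (hXcpt : ∀ i, IsCompact (X i))
    (hXcvx : ∀ i, Convex ℝ (X i))
    (f : JVec m n → ℝ)
    (hf : ContDiff ℝ 1 f)
    (hfc : ConvexOn ℝ Set.univ f)
    (c : ℝ) (hc : 0 < c)
    (x : JVec m n) (hx : ∀ i, x i ∈ X i)
    (u : JVec m n) (huX : ∀ i, u i ∈ X i)
    (hu : ∀ i : Fin m, ∀ z ∈ X i,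
      f (upd x i (u i)) + c * ‖u i - x i‖ ^ 2 ≤ f (upd x i z) + c * ‖z - x i‖ ^ 2) :
    (m : ℝ) * f u ≤ m * f x - c * ‖u - x‖ ^ 2
      + ((m : ℝ) - 1) * ⟪u - x, gradient f u⟫ := by
  have hdiff : Differentiable ℝ f := hf.differentiable one_ne_zero
  set g := gradient f u with hg
  have h1 : ∀ i, f (upd x i (u i)) + c * ‖u i - x i‖ ^ 2 ≤ f x := by
    intro i
    have := hu i (x i) (hx i)
    simpa [upd, Function.update_eq_self] using this
  have hsum1 : (∑ i, f (upd x i (u i))) + c * (∑ i, ‖u i - x i‖ ^ 2) ≤ m * f x := by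
    have hs := Finset.sum_le_sum (s := (Finset.univ : Finset (Fin m)))
      (g := fun _ => f x) (fun i _ => h1 i)
    simpa [Finset.sum_add_distrib, ← Finset.mul_sum, Finset.sum_const, Finset.card_univ,
      nsmul_eq_mul] using hs
  have hnorm : ‖u - x‖ ^ 2 = ∑ i, ‖u i - x i‖ ^ 2 := by
    simpa using PiLp.norm_sq_eq_of_L2 (fun i : Fin m => EuclideanSpace ℝ (Fin (n i))) (u - x)
  have h2 : ∀ i, f u + ⟪g, upd x i (u i) - u⟫ ≤ f (upd x i (u i)) :=
    fun i => grad_convex_le hdiff hfc u (upd x i (u i))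
  have hvec : (∑ i, (upd x i (u i) - u)) = ((m : ℝ) - 1) • (x - u) := by
    refine PiLp.ext fun j => ?_
    have happ : (∑ i, (upd x i (u i) - u)) j = ∑ i, ((upd x i (u i)) j - u j) :=
      by rw [WithLp.ofLp_sum]; exact Finset.sum_apply j Finset.univ _
    have hsmul : (((m : ℝ) - 1) • (x - u)) j = ((m : ℝ) - 1) • (x j - u j) := rfl
    rw [happ, hsmul, ← Finset.add_sum_erase _ _ (Finset.mem_univ j)]
    have hjj : (upd x j (u j)) j - u j = 0 := by simp [upd]
    have hrest : ∀ i ∈ Finset.univ.erase j, (upd x i (u i)) j - u j = x j - u j := by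
      intro i hi
      have hne : j ≠ i := (Finset.ne_of_mem_erase hi).symm
      simp [upd, Function.update_of_ne hne]
    rw [hjj, zero_add, Finset.sum_congr rfl hrest, Finset.sum_const,
      Finset.card_erase_of_mem (Finset.mem_univ j), Finset.card_univ, Fintype.card_fin]
    have hm : (1 : ℕ) ≤ m := Fin.pos j
    rw [← Nat.cast_smul_eq_nsmul ℝ, Nat.cast_sub hm, Nat.cast_one]
  have hsum2 : (m : ℝ) * f u + ((m : ℝ) - 1) * ⟪g, x - u⟫ ≤ ∑ i, f (upd x i (u i)) := by
    have hs := Finset.sum_le_sum (s := (Finset.univ : Finset (Fin m)))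
      (fun i (_ : i ∈ Finset.univ) => h2 i)
    rw [Finset.sum_add_distrib, ← inner_sum, hvec, real_inner_smul_right,
      Finset.sum_const, Finset.card_univ, Fintype.card_fin, nsmul_eq_mul] at hs
    exact hs
  have hcomm : ⟪u - x, g⟫ = -⟪g, x - u⟫ := by
    rw [real_inner_comm, show (u : JVec m n) - x = -(x - u) from (neg_sub x u).symm,
      inner_neg_right]
  rw [hnorm, hcomm]
  linarith [hsum1, hsum2]
end
end

section
/- Let c > 0, x ∈ X, and for each i = 1,…,m let u^i ∈ X^i minimize z^i ↦ f(z^i, x^{-i}) + c‖z^i − x^i‖² over X^i; set u = (u^1,…,u^m). Then (u − x)ᵀ∇f(u) ≤ (√m · L − 2c)‖u − x‖². -/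
open Matrix Filter Topology
open scoped RealInnerProductSpace

noncomputable section

/-- If a differentiable function on `ℝ` attains its min over `[0,1]` at `1`, then its
derivative at `1` is nonpositive. -/
lemma endpoint_deriv_nonpos (ψ : ℝ → ℝ) (d : ℝ) (h1 : HasDerivAt ψ d 1)
    (hmin : ∀ t ∈ Set.Icc (0:ℝ) 1, ψ 1 ≤ ψ t) : d ≤ 0 := by
  have hslope : Tendsto (slope ψ 1) (𝓝[<] 1) (𝓝 d) :=
    (hasDerivAt_iff_tendsto_slope.mp h1).mono_left
      (nhdsWithin_mono 1 (fun t ht => ne_of_lt ht))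
  refine le_of_tendsto hslope ?_
  filter_upwards [Ioo_mem_nhdsLT_of_mem (by constructor <;> norm_num :
      (1:ℝ) ∈ Set.Ioc 0 1)] with t ht
  have hnum : 0 ≤ ψ t - ψ 1 := sub_nonneg.mpr (hmin t ⟨le_of_lt ht.1, le_of_lt ht.2⟩)
  have hden : t - 1 < 0 := sub_neg.mpr ht.2
  rw [slope_def_field]
  exact div_nonpos_of_nonneg_of_nonpos hnum hden.le

/-- Coordinate norm is at most total norm in `PiLp 2`. -/
lemma coord_norm_le {m : ℕ} {n : Fin m → ℕ} (v : JVec m n) (i : Fin m) :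
    ‖v i‖ ≤ ‖v‖ := by
  have h2 : ‖v i‖ ^ 2 ≤ ‖v‖ ^ 2 := by
    conv_rhs => rw [PiLp.norm_sq_eq_of_L2]
    exact Finset.single_le_sum (fun j _ => sq_nonneg ‖v j‖) (Finset.mem_univ i)
  exact le_of_pow_le_pow_left₀ (by norm_num) (norm_nonneg v) h2

/-- If each `uⁱ ∈ Xⁱ` minimizes `zⁱ ↦ f(zⁱ, x^{-i}) + c‖zⁱ − xⁱ‖²` over `Xⁱ`, then
`(u − x)ᵀ∇f(u) ≤ (√m L − 2c)‖u − x‖²`. -/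
theorem stmt_17 {m : ℕ} {n : Fin m → ℕ}
    (X : ∀ i : Fin m, Set (EuclideanSpace ℝ (Fin (n i))))
    (hXne : ∀ i, (X i).Nonempty)
    (hXcpt : ∀ i, IsCompact (X i))
    (hXcvx : ∀ i, Convex ℝ (X i))
    (f : JVec m n → ℝ)
    (hf : ContDiff ℝ 1 f)
    (hfc : ConvexOn ℝ Set.univ f)
    (L : ℝ) (hL : 0 < L)
    (hLip : ∀ a b : JVec m n, (∀ i, a i ∈ X i) → (∀ i, b i ∈ X i) →
      ‖gradient f a - gradient f b‖ ≤ L * ‖a - b‖)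
    (c : ℝ) (hc : 0 < c)
    (x : JVec m n) (hx : ∀ i, x i ∈ X i)
    (u : JVec m n) (huX : ∀ i, u i ∈ X i)
    (hu : ∀ i : Fin m, ∀ z ∈ X i,
      f (upd x i (u i)) + c * ‖u i - x i‖ ^ 2 ≤ f (upd x i z) + c * ‖z - x i‖ ^ 2) :
    ⟪u - x, gradient f u⟫ ≤ (Real.sqrt m * L - 2 * c) * ‖u - x‖ ^ 2 := by
  classical
  have hdiff : Differentiable ℝ f := hf.differentiable one_ne_zero
  set g := gradient f with hg
  -- block difference vectors
  set d : ∀ i, EuclideanSpace ℝ (Fin (n i)) := fun i => u i - x i with hd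
  set w : Fin m → JVec m n := fun i => upd x i (u i) with hw
  -- Step 1: block first-order optimality: ⟪d i, (g (w i)) i⟫ ≤ -2c‖d i‖²
  have hblock : ∀ i : Fin m, ⟪d i, (g (w i)) i⟫ ≤ -(2 * c) * ‖d i‖ ^ 2 := by
    intro i
    set P : JVec m n := WithLp.toLp 2 (Function.update (0 : JVec m n) i (d i)) with hP
    have hcurve : ∀ t : ℝ, upd x i (x i + t • d i) = x + t • P := by
      intro t
      ext j : 1
      by_cases hji : j = i
      · subst hji
        simp [upd, P, Function.update_self]
      · simp [upd, P, Function.update_of_ne hji]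
    have hxP : x + P = w i := by
      ext j : 1
      by_cases hji : j = i
      · subst hji
        simp [P, hw, upd, hd, PiLp.add_apply, Function.update_self]
      · simp [P, hw, upd, PiLp.add_apply, Function.update_of_ne hji]
    -- the 1-D function
    set ψ : ℝ → ℝ := fun t => f (x + t • P) + c * ‖d i‖ ^ 2 * t ^ 2 with hψ
    have hψval : ∀ t : ℝ, ψ t = f (upd x i (x i + t • d i)) + c * ‖(x i + t • d i) - x i‖ ^ 2 := by
      intro t
      rw [hcurve t]
      have : ‖(x i + t • d i) - x i‖ ^ 2 = ‖d i‖ ^ 2 * t ^ 2 := by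
        rw [add_sub_cancel_left, norm_smul, mul_pow, Real.norm_eq_abs, sq_abs]
        ring
      rw [this]; ring
    -- minimality over t ∈ [0,1]
    have hmin : ∀ t ∈ Set.Icc (0:ℝ) 1, ψ 1 ≤ ψ t := by
      intro t ht
      have hz : x i + t • d i ∈ X i := by
        have : x i + t • d i = (1 - t) • x i + t • u i := by
          simp only [hd]; module
        rw [this]
        exact (hXcvx i) (hx i) (huX i) (by linarith [ht.1, ht.2]) ht.1 (by ring)
      have := hu i _ hz
      rw [hψval t, hψval 1]
      have h1 : x i + (1:ℝ) • d i = u i := by simp [hd]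
      rw [h1]
      simpa using this
    -- derivative of ψ at 1
    have hγ : HasDerivAt (fun t : ℝ => x + t • P) P 1 := by
      simpa using ((hasDerivAt_id (1:ℝ)).smul_const P).const_add x
    have h1P : x + (1:ℝ) • P = x + P := by rw [one_smul]
    have hfd : HasDerivAt (fun t : ℝ => f (x + t • P)) (fderiv ℝ f (x + P) P) 1 := by
      have hF : HasFDerivAt f (fderiv ℝ f (x + P)) (x + (1:ℝ) • P) := by
        rw [h1P]; exact (hdiff (x + P)).hasFDerivAt
      have := hF.comp_hasDerivAt 1 hγ
      exact this
    have hq : HasDerivAt (fun t : ℝ => c * ‖d i‖ ^ 2 * t ^ 2)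
        (c * ‖d i‖ ^ 2 * (2 * 1)) 1 := by
      simpa using (hasDerivAt_pow 2 (1:ℝ)).const_mul (c * ‖d i‖ ^ 2)
    have hψd : HasDerivAt ψ (fderiv ℝ f (x + P) P + c * ‖d i‖ ^ 2 * (2 * 1)) 1 := hfd.add hq
    have hder_nonpos := endpoint_deriv_nonpos ψ _ hψd hmin
    -- relate fderiv to gradient
    have hgrad : ⟪g (x + P), P⟫ = fderiv ℝ f (x + P) P := by
      rw [hg, gradient]
      exact InnerProductSpace.toDual_symm_apply
    have hinner : ⟪g (x + P), P⟫ = ⟪(g (w i)) i, d i⟫ := by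
      rw [hxP, PiLp.inner_apply]
      rw [Finset.sum_eq_single i]
      · simp [P, Function.update_self]
      · intro j _ hji
        simp [P, Function.update_of_ne hji]
      · intro h; exact absurd (Finset.mem_univ i) h
    have : ⟪(g (w i)) i, d i⟫ + 2 * c * ‖d i‖ ^ 2 ≤ 0 := by
      rw [← hinner, hgrad]
      nlinarith [hder_nonpos]
    rw [real_inner_comm]
    linarith
  -- Step 2: w i coordinates lie in X, and ‖u - w i‖ ≤ ‖u - x‖
  have hwX : ∀ i j, (w i) j ∈ X j := by
    intro i j
    by_cases hji : j = i
    · subst hji; simp [hw, upd, Function.update_self]; exact huX j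
    · simp [hw, upd, Function.update_of_ne hji]; exact hx j
  have hwnorm : ∀ i, ‖u - w i‖ ≤ ‖u - x‖ := by
    intro i
    have h2 : ‖u - w i‖ ^ 2 ≤ ‖u - x‖ ^ 2 := by
      rw [PiLp.norm_sq_eq_of_L2, PiLp.norm_sq_eq_of_L2]
      apply Finset.sum_le_sum
      intro j _
      by_cases hji : j = i
      · subst hji
        have : (u - w j) j = 0 := by
          simp [hw, upd, PiLp.sub_apply, Function.update_self]
        rw [this]
        simpa using sq_nonneg ‖(u - x) j‖
      · have : (u - w i) j = (u - x) j := by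
          simp [hw, upd, PiLp.sub_apply, Function.update_of_ne hji]
        rw [this]
    exact le_of_pow_le_pow_left₀ (by norm_num) (norm_nonneg _) h2
  -- Step 3: assemble
  have hsum : ⟪u - x, g u⟫ = ∑ i, ⟪(u - x) i, (g u) i⟫ := PiLp.inner_apply _ _
  have hterm : ∀ i : Fin m, ⟪(u - x) i, (g u) i⟫ ≤
      ‖d i‖ * (L * ‖u - x‖) - 2 * c * ‖d i‖ ^ 2 := by
    intro i
    have hdi : (u - x) i = d i := by simp [hd, PiLp.sub_apply]
    have hco : (g u) i = (g u - g (w i)) i + (g (w i)) i := by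
      simp [PiLp.sub_apply]
    rw [hdi, hco, inner_add_right]
    have h1 : ⟪d i, (g u - g (w i)) i⟫ ≤ ‖d i‖ * (L * ‖u - x‖) := by
      calc ⟪d i, (g u - g (w i)) i⟫ ≤ ‖d i‖ * ‖(g u - g (w i)) i‖ := real_inner_le_norm _ _
        _ ≤ ‖d i‖ * ‖g u - g (w i)‖ :=
            mul_le_mul_of_nonneg_left (coord_norm_le _ i) (norm_nonneg _)
        _ ≤ ‖d i‖ * (L * ‖u - w i‖) :=
            mul_le_mul_of_nonneg_left (hLip u (w i) huX (hwX i)) (norm_nonneg _)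
        _ ≤ ‖d i‖ * (L * ‖u - x‖) := by
            apply mul_le_mul_of_nonneg_left _ (norm_nonneg _)
            exact mul_le_mul_of_nonneg_left (hwnorm i) hL.le
    have h2 := hblock i
    linarith
  have hsum_le : ⟪u - x, g u⟫ ≤
      (∑ i, ‖d i‖) * (L * ‖u - x‖) - 2 * c * ∑ i, ‖d i‖ ^ 2 := by
    rw [hsum]
    calc ∑ i, ⟪(u - x) i, (g u) i⟫ ≤ ∑ i, (‖d i‖ * (L * ‖u - x‖) - 2 * c * ‖d i‖ ^ 2) :=
          Finset.sum_le_sum (fun i _ => hterm i)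
      _ = (∑ i, ‖d i‖) * (L * ‖u - x‖) - 2 * c * ∑ i, ‖d i‖ ^ 2 := by
          rw [Finset.sum_sub_distrib, ← Finset.sum_mul, ← Finset.mul_sum]
  have hnormsq : ∑ i, ‖d i‖ ^ 2 = ‖u - x‖ ^ 2 := by
    rw [PiLp.norm_sq_eq_of_L2]
    apply Finset.sum_congr rfl
    intro i _
    simp [hd, PiLp.sub_apply]
  have hcs : ∑ i, ‖d i‖ ≤ Real.sqrt m * ‖u - x‖ := by
    have hsq : (∑ i, ‖d i‖) ^ 2 ≤ (m : ℝ) * ‖u - x‖ ^ 2 := by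
      have := sq_sum_le_card_mul_sum_sq (s := (Finset.univ : Finset (Fin m)))
        (f := fun i => ‖d i‖)
      rw [hnormsq] at this
      simpa using this
    have hnn : 0 ≤ ∑ i, ‖d i‖ := Finset.sum_nonneg (fun i _ => norm_nonneg _)
    calc ∑ i, ‖d i‖ = Real.sqrt ((∑ i, ‖d i‖) ^ 2) := (Real.sqrt_sq hnn).symm
      _ ≤ Real.sqrt ((m : ℝ) * ‖u - x‖ ^ 2) := Real.sqrt_le_sqrt hsq
      _ = Real.sqrt m * ‖u - x‖ := by
          rw [Real.sqrt_mul (Nat.cast_nonneg m), Real.sqrt_sq (norm_nonneg _)]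
  calc ⟪u - x, g u⟫ ≤ (∑ i, ‖d i‖) * (L * ‖u - x‖) - 2 * c * ∑ i, ‖d i‖ ^ 2 := hsum_le
    _ ≤ (Real.sqrt m * ‖u - x‖) * (L * ‖u - x‖) - 2 * c * ‖u - x‖ ^ 2 := by
        rw [hnormsq]
        have : 0 ≤ L * ‖u - x‖ := mul_nonneg hL.le (norm_nonneg _)
        nlinarith [hcs]
    _ = (Real.sqrt m * L - 2 * c) * ‖u - x‖ ^ 2 := by ring
end
end

section
/- Let c > 0, x ∈ X, and for each i = 1,…,m let u^i ∈ X^i minimize z^i ↦ f(z^i, x^{-i}) + c‖z^i − x^i‖² over X^i; set u = (u^1,…,u^m). Then m · f(u) ≤ m · f(x) + ( −c + (m−1)(√m · L − 2c) ) ‖u − x‖². In particular, if c > ((m−1)/(2m−1)) · √m · L, then f(u) ≤ f(x), with strict inequality unless u = x. -/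
open Matrix Filter Topology
open scoped RealInnerProductSpace

noncomputable section

lemma hasDerivAt_line {E : Type*} [NormedAddCommGroup E] [InnerProductSpace ℝ E] [CompleteSpace E]
    {f : E → ℝ} (hf : Differentiable ℝ f) (x₀ v : E) (t₀ : ℝ) :
    HasDerivAt (fun t : ℝ => f (x₀ + t • v)) ⟪gradient f (x₀ + t₀ • v), v⟫ t₀ := by
  have hγ : HasDerivAt (fun t : ℝ => x₀ + t • v) v t₀ := by
    simpa using ((hasDerivAt_id t₀).smul_const v).const_add x₀
  have hg := (hf (x₀ + t₀ • v)).hasGradientAt.hasFDerivAt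
  refine (hg.comp_hasDerivAt t₀ hγ).congr_deriv ?_
  simp [InnerProductSpace.toDual_apply_apply]

lemma deriv_nonpos_of_min {φ : ℝ → ℝ} {p : ℝ} (hd : HasDerivAt φ p 1)
    (h : ∀ t ∈ Set.Ico (0:ℝ) 1, φ 1 ≤ φ t) : p ≤ 0 := by
  have ht : Tendsto (slope φ 1) (𝓝[<] (1:ℝ)) (𝓝 p) :=
    (hasDerivAt_iff_tendsto_slope.mp hd).mono_left
      (nhdsWithin_mono _ (fun y hy => ne_of_lt hy))
  refine le_of_tendsto ht ?_
  filter_upwards [Ioo_mem_nhdsLT_of_mem (⟨zero_lt_one, le_refl (1:ℝ)⟩)] with t ht'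
  have h1 : φ 1 ≤ φ t := h t ⟨ht'.1.le, ht'.2⟩
  rw [slope_def_field]
  apply div_nonpos_of_nonneg_of_nonpos <;> linarith [ht'.2]

lemma grad_tangent {E : Type*} [NormedAddCommGroup E] [InnerProductSpace ℝ E] [CompleteSpace E]
    {f : E → ℝ} (hf : Differentiable ℝ f) (hfc : ConvexOn ℝ Set.univ f) (a b : E) :
    f a + ⟪gradient f a, b - a⟫ ≤ f b := by
  set ψ := fun t : ℝ => f (a + t • (b - a)) with hψ
  have hd : HasDerivAt ψ ⟪gradient f a, b - a⟫ 0 := by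
    simpa using hasDerivAt_line hf a (b - a) 0
  have hψc : ConvexOn ℝ Set.univ ψ := by
    have := hfc.comp_affineMap (AffineMap.lineMap a b)
    have h2 : ψ = f ∘ (AffineMap.lineMap a b) := by
      funext t
      simp [hψ, AffineMap.lineMap_apply_module', add_comm]
    rw [h2, ← Set.preimage_univ (f := (AffineMap.lineMap a b : ℝ → E))]
    exact this
  have := hψc.le_slope_of_hasDerivAt (Set.mem_univ (0:ℝ)) (Set.mem_univ (1:ℝ)) zero_lt_one hd
  rw [slope_def_field] at this
  simp only [hψ, zero_smul, add_zero, one_smul] at this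
  have h1 : a + (b - a) = b := by abel
  rw [h1] at this
  linarith [this]

set_option maxHeartbeats 1000000 in
/-- If each `uⁱ ∈ Xⁱ` minimizes `zⁱ ↦ f(zⁱ, x^{-i}) + c‖zⁱ − xⁱ‖²` over `Xⁱ`, then
`m f(u) ≤ m f(x) + (−c + (m−1)(√m L − 2c))‖u − x‖²`; in particular, if
`c > ((m−1)/(2m−1))√m L` then `f(u) ≤ f(x)`, strictly unless `u = x`. -/
theorem stmt_18 {m : ℕ} {n : Fin m → ℕ}
    (X : ∀ i : Fin m, Set (EuclideanSpace ℝ (Fin (n i))))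
    (hXne : ∀ i, (X i).Nonempty)
    (hXcpt : ∀ i, IsCompact (X i))
    (hXcvx : ∀ i, Convex ℝ (X i))
    (f : JVec m n → ℝ)
    (hf : ContDiff ℝ 1 f)
    (hfc : ConvexOn ℝ Set.univ f)
    (L : ℝ) (hL : 0 < L)
    (hLip : ∀ a b : JVec m n, (∀ i, a i ∈ X i) → (∀ i, b i ∈ X i) →
      ‖gradient f a - gradient f b‖ ≤ L * ‖a - b‖)
    (c : ℝ) (hc : 0 < c)
    (x : JVec m n) (hx : ∀ i, x i ∈ X i)
    (u : JVec m n) (huX : ∀ i, u i ∈ X i)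
    (hu : ∀ i : Fin m, ∀ z ∈ X i,
      f (upd x i (u i)) + c * ‖u i - x i‖ ^ 2 ≤ f (upd x i z) + c * ‖z - x i‖ ^ 2) :
    (m : ℝ) * f u ≤ m * f x
        + (-c + ((m : ℝ) - 1) * (Real.sqrt m * L - 2 * c)) * ‖u - x‖ ^ 2 ∧
      (((m : ℝ) - 1) / (2 * m - 1) * (Real.sqrt m * L) < c →
        f u ≤ f x ∧ (u ≠ x → f u < f x)) := by
  classical
  have hfd : Differentiable ℝ f := hf.differentiable one_ne_zero
  rcases Nat.eq_zero_or_pos m with hm0 | hm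
  · subst hm0
    have hux : u = x := PiLp.ext fun i => i.elim0
    subst hux
    constructor
    · simp
    · intro _
      exact ⟨le_refl _, fun h => absurd rfl h⟩
  -- main case m ≥ 1
  have hm' : (0:ℝ) < m := by exact_mod_cast hm
  have hm1 : (1:ℝ) ≤ (m:ℝ) := by exact_mod_cast hm
  set v : Fin m → JVec m n := fun i => upd 0 i (u i - x i) with hv
  -- block application facts
  have hvii : ∀ i, v i i = u i - x i := by
    intro i; simp [hv, upd]
  have hvij : ∀ i j, j ≠ i → v i j = 0 := by
    intro i j hj; simp [hv, upd, Function.update_of_ne hj]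
  -- `upd x i (u i) = x + v i`
  have hxv : ∀ i, upd x i (u i) = x + v i := by
    intro i; refine PiLp.ext fun j => ?_
    rcases eq_or_ne j i with rfl | hj
    · simp [upd, PiLp.add_apply, hvii]
    · simp [upd, PiLp.add_apply, hvij _ _ hj, Function.update_of_ne hj]
  have hupdt : ∀ (i : Fin m) (t : ℝ), upd x i (x i + t • (u i - x i)) = x + t • v i := by
    intro i t; refine PiLp.ext fun j => ?_
    rcases eq_or_ne j i with rfl | hj
    · simp [upd, PiLp.add_apply, PiLp.smul_apply, hvii]
    · simp [upd, PiLp.add_apply, PiLp.smul_apply, hvij _ _ hj, Function.update_of_ne hj]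
  have hux0 : ∀ i, upd x i (x i) = x := by
    intro i; refine PiLp.ext fun j => ?_
    rcases eq_or_ne j i with rfl | hj
    · simp [upd]
    · simp [upd, Function.update_of_ne hj]
  -- norm facts
  have hnv : ∀ i, ‖v i‖ = ‖u i - x i‖ := by
    intro i
    have hs : ∑ j, ‖v i j‖^2 = ‖u i - x i‖^2 := by
      rw [Finset.sum_eq_single i (fun b _ hb => by rw [hvij _ _ hb]; simp) (by simp)]
      rw [hvii]
    rw [PiLp.norm_eq_of_L2, hs, Real.sqrt_sq (norm_nonneg _)]
  have hnd : ‖u - x‖^2 = ∑ i, ‖u i - x i‖^2 := by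
    rw [PiLp.norm_sq_eq_of_L2]
    simp [PiLp.sub_apply]
  have huy : ∀ i, ‖u - (x + v i)‖ ≤ ‖u - x‖ := by
    intro i
    have h1 : ∀ j, ‖(u - (x + v i)) j‖^2 ≤ ‖(u - x) j‖^2 := by
      intro j
      rcases eq_or_ne j i with rfl | hj
      · have e : (u - (x + v j)) j = 0 := by
          simp only [PiLp.sub_apply, PiLp.add_apply, hvii]
          abel
        rw [e]
        simp
      · have e : (u - (x + v i)) j = (u - x) j := by
          simp only [PiLp.sub_apply, PiLp.add_apply, hvij _ _ hj]
          abel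
        rw [e]
    rw [PiLp.norm_eq_of_L2 (u - (x + v i)), PiLp.norm_eq_of_L2 (u - x)]
    exact Real.sqrt_le_sqrt (Finset.sum_le_sum fun j _ => h1 j)
  have hsumv : ∑ i, v i = u - x := by
    refine PiLp.ext fun j => ?_
    rw [WithLp.ofLp_sum, Finset.sum_apply]
    rw [Finset.sum_eq_single j (fun b _ hb => hvij b j (Ne.symm hb)) (by simp)]
    rw [hvii, PiLp.sub_apply]
  -- immediate decrease from the proximal minimization
  have hfy : ∀ i, f (x + v i) + c * ‖u i - x i‖^2 ≤ f x := by
    intro i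
    have h := hu i (x i) (hx i)
    rw [hxv i, hux0 i] at h
    simpa using h
  -- per-block gradient inequality
  have hgi : ∀ i, ⟪gradient f (x + v i), v i⟫ ≤ -(2*c) * ‖u i - x i‖^2 := by
    intro i
    set K := ‖u i - x i‖^2 with hK
    have hdf := hasDerivAt_line hfd x (v i) 1
    have h1 : HasDerivAt (fun t : ℝ => c * (t^2 * K)) (c * (2 * K)) 1 := by
      have h0 : HasDerivAt (fun t : ℝ => t^2) 2 1 := by simpa using hasDerivAt_pow 2 (1:ℝ)
      simpa using (h0.mul_const K).const_mul c
    have hdφ := hdf.add h1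
    have hmin : ∀ t ∈ Set.Ico (0:ℝ) 1,
        f (x + (1:ℝ) • v i) + c * ((1:ℝ)^2 * K) ≤ f (x + t • v i) + c * (t^2 * K) := by
      intro t ht
      have hz : x i + t • (u i - x i) ∈ X i := by
        have h := hXcvx i (hx i) (huX i) (by linarith [ht.2] : (0:ℝ) ≤ 1 - t) ht.1 (by ring)
        have e : (1-t) • x i + t • u i = x i + t • (u i - x i) := by
          rw [smul_sub, sub_smul, one_smul]; abel
        rwa [e] at h
      have h2 := hu i _ hz
      rw [hxv i, hupdt i t] at h2
      have e2 : ‖(x i + t • (u i - x i)) - x i‖^2 = t^2 * K := by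
        rw [add_sub_cancel_left, norm_smul, mul_pow, Real.norm_eq_abs, sq_abs, hK]
      rw [e2] at h2
      calc f (x + (1:ℝ) • v i) + c * ((1:ℝ)^2 * K)
          = f (x + v i) + c * K := by rw [one_smul]; ring_nf
        _ ≤ f (x + t • v i) + c * (t^2 * K) := h2
    have hd0 := deriv_nonpos_of_min hdφ hmin
    rw [one_smul] at hd0
    linarith
  -- per-block bound on ⟪∇f(u), v i⟫
  have hblock : ∀ i, ⟪gradient f u, v i⟫
      ≤ -(2*c) * ‖u i - x i‖^2 + (L * ‖u - x‖) * ‖u i - x i‖ := by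
    intro i
    have hXy : ∀ j, (x + v i) j ∈ X j := by
      intro j
      rcases eq_or_ne j i with rfl | hj
      · have e : (x + v j) j = u j := by
          rw [PiLp.add_apply, hvii]; abel
        rw [e]; exact huX j
      · have e : (x + v i) j = x j := by
          rw [PiLp.add_apply, hvij _ _ hj, add_zero]
        rw [e]; exact hx j
    have hlip := hLip u (x + v i) huX hXy
    have hsplit : ⟪gradient f u, v i⟫
        = ⟪gradient f (x + v i), v i⟫ + ⟪gradient f u - gradient f (x + v i), v i⟫ := by
      rw [inner_sub_left]; ring
    have hcs : ⟪gradient f u - gradient f (x + v i), v i⟫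
        ≤ ‖gradient f u - gradient f (x + v i)‖ * ‖v i‖ := real_inner_le_norm _ _
    have h3 : ‖gradient f u - gradient f (x + v i)‖ * ‖v i‖ ≤ (L * ‖u - x‖) * ‖u i - x i‖ := by
      rw [hnv i]
      apply mul_le_mul_of_nonneg_right _ (norm_nonneg _)
      calc ‖gradient f u - gradient f (x + v i)‖ ≤ L * ‖u - (x + v i)‖ := hlip
        _ ≤ L * ‖u - x‖ := by
            apply mul_le_mul_of_nonneg_left (huy i) hL.le
    linarith [hgi i]
  -- summed gradient bound
  have hsum : ⟪gradient f u, u - x⟫ ≤ (Real.sqrt m * L - 2*c) * ‖u - x‖^2 := by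
    have h1 : ⟪gradient f u, u - x⟫ = ∑ i, ⟪gradient f u, v i⟫ := by
      rw [← hsumv, inner_sum]
    have h3 : ∑ i, ‖u i - x i‖ ≤ Real.sqrt m * ‖u - x‖ := by
      have hcs := sq_sum_le_card_mul_sum_sq (s := Finset.univ) (f := fun i => ‖u i - x i‖)
      simp only [Finset.card_univ, Fintype.card_fin] at hcs
      have h4 : (∑ i, ‖u i - x i‖)^2 ≤ (Real.sqrt m * ‖u - x‖)^2 := by
        rw [mul_pow, Real.sq_sqrt (by positivity : (0:ℝ) ≤ (m:ℝ))]
        calc (∑ i, ‖u i - x i‖)^2 ≤ (m:ℝ) * ∑ i, ‖u i - x i‖^2 := by exact_mod_cast hcs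
          _ = (m:ℝ) * ‖u - x‖^2 := by rw [hnd]
      calc ∑ i, ‖u i - x i‖ = Real.sqrt ((∑ i, ‖u i - x i‖)^2) := by
            rw [Real.sqrt_sq (Finset.sum_nonneg fun i _ => norm_nonneg _)]
        _ ≤ Real.sqrt ((Real.sqrt m * ‖u - x‖)^2) := Real.sqrt_le_sqrt h4
        _ = Real.sqrt m * ‖u - x‖ := Real.sqrt_sq (by positivity)
    calc ⟪gradient f u, u - x⟫ = ∑ i, ⟪gradient f u, v i⟫ := h1
      _ ≤ ∑ i, (-(2*c) * ‖u i - x i‖^2 + (L * ‖u - x‖) * ‖u i - x i‖) :=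
          Finset.sum_le_sum fun i _ => hblock i
      _ = -(2*c) * ‖u - x‖^2 + (L * ‖u - x‖) * ∑ i, ‖u i - x i‖ := by
          rw [Finset.sum_add_distrib, ← Finset.mul_sum, ← Finset.mul_sum, hnd]
      _ ≤ -(2*c) * ‖u - x‖^2 + (L * ‖u - x‖) * (Real.sqrt m * ‖u - x‖) := by
          have : (0:ℝ) ≤ L * ‖u - x‖ := by positivity
          nlinarith [h3, this]
      _ = (Real.sqrt m * L - 2*c) * ‖u - x‖^2 := by ring
  -- Jensen step
  have hw : f (x + (m:ℝ)⁻¹ • (u - x)) ≤ f x - c / m * ‖u - x‖^2 := by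
    have hwsum : x + (m:ℝ)⁻¹ • (u - x) = ∑ i, (m:ℝ)⁻¹ • (x + v i) := by
      rw [← Finset.smul_sum, Finset.sum_add_distrib, hsumv, Finset.sum_const,
        Finset.card_univ, Fintype.card_fin, ← Nat.cast_smul_eq_nsmul ℝ, smul_add, smul_smul,
        inv_mul_cancel₀ (ne_of_gt hm'), one_smul]
    have hjen := hfc.map_sum_le (t := Finset.univ) (w := fun _ : Fin m => (m:ℝ)⁻¹)
      (p := fun i => x + v i) (fun i _ => by positivity)
      (by rw [Finset.sum_const, Finset.card_univ, Fintype.card_fin, nsmul_eq_mul,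
            mul_inv_cancel₀ (ne_of_gt hm')])
      (fun i _ => Set.mem_univ _)
    rw [← hwsum] at hjen
    calc f (x + (m:ℝ)⁻¹ • (u - x)) ≤ ∑ i, (m:ℝ)⁻¹ • f (x + v i) := hjen
      _ ≤ ∑ i, (m:ℝ)⁻¹ * (f x - c * ‖u i - x i‖^2) := by
          apply Finset.sum_le_sum
          intro i _
          rw [smul_eq_mul]
          apply mul_le_mul_of_nonneg_left _ (by positivity)
          linarith [hfy i]
      _ = f x - c / m * ‖u - x‖^2 := by
          rw [← Finset.mul_sum, Finset.sum_sub_distrib, Finset.sum_const, ← Finset.mul_sum,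
            ← hnd, Finset.card_univ, Fintype.card_fin, nsmul_eq_mul]
          field_simp
  -- tangent inequality at u
  have htan := grad_tangent hfd hfc u (x + (m:ℝ)⁻¹ • (u - x))
  have hinner : ⟪gradient f u, (x + (m:ℝ)⁻¹ • (u - x)) - u⟫
      = ((m:ℝ)⁻¹ - 1) * ⟪gradient f u, u - x⟫ := by
    have e : (x + (m:ℝ)⁻¹ • (u - x)) - u = ((m:ℝ)⁻¹ - 1) • (u - x) := by
      rw [sub_smul, one_smul]; abel
    rw [e, real_inner_smul_right]
  rw [hinner] at htan
  have h1m : (0:ℝ) ≤ 1 - (m:ℝ)⁻¹ := by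
    rw [sub_nonneg]
    exact inv_le_one_of_one_le₀ hm1
  set G := ⟪gradient f u, u - x⟫ with hG
  set S := Real.sqrt m * L - 2*c with hS
  have hGS : (1 - (m:ℝ)⁻¹) * G ≤ (1 - (m:ℝ)⁻¹) * (S * ‖u - x‖^2) :=
    mul_le_mul_of_nonneg_left hsum h1m
  have hfu : f u ≤ f x - c / m * ‖u - x‖^2 + (1 - (m:ℝ)⁻¹) * (S * ‖u - x‖^2) := by
    nlinarith [htan, hw, hGS]
  have goal1 : (m : ℝ) * f u ≤ m * f x + (-c + ((m : ℝ) - 1) * S) * ‖u - x‖^2 := by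
    have h5 := mul_le_mul_of_nonneg_left hfu (le_of_lt hm')
    have hid : (m:ℝ) * (f x - c / m * ‖u - x‖^2 + (1 - (m:ℝ)⁻¹) * (S * ‖u - x‖^2))
        = m * f x + (-c + ((m:ℝ) - 1) * S) * ‖u - x‖^2 := by
      field_simp
      ring
    rw [hid] at h5
    exact h5
  refine ⟨goal1, fun hc2 => ?_⟩
  have h2m : (0:ℝ) < 2*(m:ℝ) - 1 := by linarith
  have h6 := mul_lt_mul_of_pos_right hc2 h2m
  rw [div_mul_eq_mul_div, div_mul_cancel₀ _ (ne_of_gt h2m)] at h6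
  have hKneg : -c + ((m:ℝ) - 1) * S < 0 := by
    rw [hS]; nlinarith [h6]
  have hE : (0:ℝ) ≤ ‖u - x‖^2 := by positivity
  constructor
  · have h7 : (m:ℝ) * f u ≤ m * f x := by nlinarith [goal1, hKneg, hE]
    exact le_of_mul_le_mul_left h7 hm'
  · intro hne
    have hEpos : (0:ℝ) < ‖u - x‖^2 :=
      pow_pos (norm_pos_iff.mpr (sub_ne_zero.2 hne)) 2
    have h8 : (m:ℝ) * f u < m * f x := by nlinarith [goal1, hKneg, hEpos]
    exact lt_of_mul_lt_mul_left h8 (le_of_lt hm')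
end
end
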